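/- arXiv:1802.01107 — 4 statements merged into one kernel-verified Lean document; each statement's English description precedes it below -/
import Mathlib

section
/- Every alternating word w ∈ 𝒜 can be written uniquely as w = y₀ s₁ y₁ s₂ ⋯ y_{l−1} s_l y_l, where each y_i ∈ {b, b⁻¹} except that y₀ and/or y_l may be empty, each s_i ∈ S_a⁺ ∪ S_a⁻, and the s_i alternate between S_a⁺ and S_a⁻ (there is no i with s_i, s_{i+1} both in S_a⁺ or both in S_a⁻). -/
open FreeGroup

abbrev W : Type := FreeGroup (Fin 2)

/-- The set of alternating words: reduced words whose letters alternate
between the two generators `a` (index 0) and `b` (index 1). -/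
def Alt : Set W := {w | List.Chain' (fun p q : Fin 2 × Bool => p.1 ≠ q.1) w.toWord}

/-- `S_a⁺`: alternating words starting and ending with `a`, containing no `a⁻¹`. -/
def SaP : Set W :=
  {w | w ∈ Alt ∧ w.toWord.head? = some ((0 : Fin 2), true) ∧
    w.toWord.getLast? = some ((0 : Fin 2), true) ∧ ((0 : Fin 2), false) ∉ w.toWord}

/-- `S_a⁻`: alternating words starting and ending with `a⁻¹`, containing no `a`. -/
def SaN : Set W :=
  {w | w ∈ Alt ∧ w.toWord.head? = some ((0 : Fin 2), false) ∧
    w.toWord.getLast? = some ((0 : Fin 2), false) ∧ ((0 : Fin 2), true) ∉ w.toWord}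

/-- The single letters `b` and `b⁻¹`. -/
def Blet : Set W :=
  {w | w = FreeGroup.mk [((1 : Fin 2), true)] ∨ w = FreeGroup.mk [((1 : Fin 2), false)]}

/-- Data of an `a`-decomposition: a number `l` of blocks, the blocks
`s₁, …, s_l` and the separating letters `y₀, …, y_l`. -/
def ADecompData : Type := Σ l : ℕ, (Fin l → W) × (Fin (l + 1) → W)

/-- `d` is an `a`-decomposition of `w`: `w = y₀ s₁ y₁ ⋯ y_{l-1} s_l y_l` as reduced
words, where the `sᵢ` lie in `S_a⁺ ∪ S_a⁻` and alternate between `S_a⁺` and `S_a⁻`,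
the interior `yᵢ` are single letters `b^{±1}`, and `y₀`, `y_l` are single letters
`b^{±1}` or empty. -/
def IsADecomp (w : W) (d : ADecompData) : Prop :=
  (∀ i : Fin d.1, d.2.1 i ∈ SaP ∪ SaN) ∧
  (∀ i : Fin (d.1 + 1), (i.1 = 0 ∨ i.1 = d.1) → (d.2.2 i = 1 ∨ d.2.2 i ∈ Blet)) ∧
  (∀ i : Fin (d.1 + 1), i.1 ≠ 0 → i.1 ≠ d.1 → d.2.2 i ∈ Blet) ∧
  (∀ (i : ℕ) (h : i + 1 < d.1),
    (d.2.1 ⟨i, Nat.lt_of_succ_lt h⟩ ∈ SaP ↔ d.2.1 ⟨i + 1, h⟩ ∈ SaN)) ∧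
  w.toWord = (d.2.2 0).toWord ++
    (List.ofFn fun i : Fin d.1 => (d.2.1 i).toWord ++ (d.2.2 i.succ).toWord).flatten

namespace ADecompAux

abbrev Λ : Type := Fin 2 × Bool

def altL (l : List Λ) : Prop := List.Chain' (fun p q : Λ => p.1 ≠ q.1) l

def inClass (ε : Bool) (s : List Λ) : Prop :=
  altL s ∧ s.head? = some ((0:Fin 2), ε) ∧ s.getLast? = some ((0:Fin 2), ε) ∧ ((0:Fin 2), !ε) ∉ s

def isB (y : List Λ) : Prop := ∃ β, y = [((1:Fin 2), β)]

abbrev Blk : Type := List Λ × List Λ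

def brel (p q : Blk) : Prop := inClass true p.1 ↔ inClass false q.1

def GoodDec (w : List Λ) (d : List Λ × List Blk) : Prop :=
  (d.1 = [] ∨ isB d.1) ∧
  (∀ p ∈ d.2, ∃ ε, inClass ε p.1) ∧
  (∀ p ∈ d.2.dropLast, isB p.2) ∧
  (∀ p ∈ d.2.getLast?, p.2 = [] ∨ isB p.2) ∧
  List.Chain' brel d.2 ∧
  w = d.1 ++ (d.2.map fun p => p.1 ++ p.2).flatten

lemma inClass_ne_nil {ε s} (h : inClass ε s) : s ≠ [] := by
  rintro rfl; simp [inClass] at h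

lemma inClass_head {ε s} (h : inClass ε s) : s.head? = some ((0:Fin 2), ε) := h.2.1

lemma classUnique {ε ε' s} (h : inClass ε s) (h' : inClass ε' s) : ε = ε' := by
  have := h.2.1; rw [h'.2.1] at this
  simpa using this.symm

lemma class_of_head {ε ε' s} (h : inClass ε s) (hh : s.head? = some ((0:Fin 2), ε')) :
    inClass ε' s := by
  have : ε = ε' := by rw [h.2.1] at hh; simpa using hh
  exact this ▸ h

lemma brel_iff {p q : Blk} {ε ε'} (h : inClass ε p.1) (h' : inClass ε' q.1) :
    brel p q ↔ ε = !ε' := by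
  have h1 : inClass true p.1 ↔ ε = true := ⟨fun hc => (classUnique hc h).symm, fun he => he ▸ h⟩
  have h2 : inClass false q.1 ↔ ε' = false := ⟨fun hc => (classUnique hc h').symm, fun he => he ▸ h'⟩
  unfold brel
  rw [h1, h2]
  cases ε <;> cases ε' <;> simp

lemma singleton_class (ε : Bool) : inClass ε [((0:Fin 2), ε)] := by
  constructor
  · exact List.isChain_singleton _
  refine ⟨rfl, rfl, ?_⟩
  simp


lemma fin2 (i : Fin 2) : i = 0 ∨ i = 1 := by fin_cases i <;> simp

lemma mem_dropLast_cons {p q : Blk} {bs : List Blk} (h : p ∈ bs.dropLast) :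
    p ∈ (q :: bs).dropLast := by
  cases bs with
  | nil => simp at h
  | cons r l => rw [List.dropLast_cons₂]; exact List.mem_cons_of_mem _ h

lemma flatten_nil {bs : List Blk} (hcl : ∀ p ∈ bs, ∃ ε, inClass ε p.1)
    (h : (bs.map fun p => p.1 ++ p.2).flatten = []) : bs = [] := by
  cases bs with
  | nil => rfl
  | cons p l =>
    exfalso
    simp only [List.map_cons, List.flatten_cons, List.append_assoc, List.append_eq_nil_iff] at h
    obtain ⟨ε, hc⟩ := hcl p (List.mem_cons_self)
    exact inClass_ne_nil hc h.1

lemma flatten_head {s y : List Λ} {bs : List Blk} (hs : s ≠ []) {r : List Λ}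
    (heq : r = s ++ y ++ (bs.map fun p => p.1 ++ p.2).flatten) : r.head? = s.head? := by
  subst heq
  rw [List.append_assoc, List.head?_append_of_ne_nil _ hs]

lemma good_head_a {w y0 bs σ} (hd : GoodDec w (y0, bs)) (hh : w.head? = some ((0:Fin 2), σ)) :
    y0 = [] ∧ bs ≠ [] := by
  obtain ⟨hy0, hcl, -, -, -, heq⟩ := hd
  have hy : y0 = [] := by
    rcases hy0 with h | ⟨β, rfl⟩
    · exact h
    · rw [heq] at hh; simp at hh
  subst hy
  refine ⟨rfl, ?_⟩
  rintro rfl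
  rw [heq] at hh; simp at hh

lemma good_first_block {w bs σ} (hd : GoodDec w ([], bs)) (hh : w.head? = some ((0:Fin 2), σ)) :
    ∃ s y bs', bs = (s, y) :: bs' ∧ inClass σ s := by
  have hne := (good_head_a hd hh).2
  obtain ⟨hy0, hcl, -, -, -, heq⟩ := hd
  cases bs with
  | nil => exact absurd rfl hne
  | cons p l =>
    obtain ⟨ε, hc⟩ := hcl p (List.mem_cons_self)
    refine ⟨p.1, p.2, l, rfl, ?_⟩
    have : w.head? = p.1.head? := by
      rw [heq]
      simp only [List.nil_append, List.map_cons, List.flatten_cons, List.append_assoc]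
      exact List.head?_append_of_ne_nil _ (inClass_ne_nil hc)
    exact class_of_head hc (by rw [← this, hh])

lemma y_forced {y : List Λ} {bs : List Blk} {r : List Λ} {β : Bool}
    (hy : y = [] ∨ isB y)
    (hcl : ∀ p ∈ bs, ∃ δ, inClass δ p.1)
    (heq : r = y ++ (bs.map fun p => p.1 ++ p.2).flatten)
    (hh : r.head? = some ((1:Fin 2), β)) : y = [((1:Fin 2), β)] := by
  rcases hy with rfl | ⟨β', rfl⟩
  · exfalso
    rw [List.nil_append] at heq
    cases bs with
    | nil => rw [heq] at hh; simp at hh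
    | cons p l =>
      obtain ⟨δ, hc⟩ := hcl p (List.mem_cons_self)
      have : r.head? = p.1.head? := by
        rw [heq]
        simp only [List.map_cons, List.flatten_cons, List.append_assoc]
        exact List.head?_append_of_ne_nil _ (inClass_ne_nil hc)
      rw [hh, inClass_head hc] at this
      simp at this
  · rw [heq] at hh
    simp at hh
    subst hh
    rfl

lemma chain_congr {s s' y y' : List Λ} {bs : List Blk} {ε : Bool}
    (hs : inClass ε s) (hs' : inClass ε s')
    (hcl : ∀ p ∈ bs, ∃ δ, inClass δ p.1)
    (h : List.Chain' brel ((s, y) :: bs)) : List.Chain' brel ((s', y') :: bs) := by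
  cases bs with
  | nil => exact List.isChain_singleton _
  | cons q l =>
    simp only [List.Chain', List.isChain_cons_cons] at h ⊢
    obtain ⟨δ, hq⟩ := hcl q (List.mem_cons_self)
    exact ⟨(brel_iff hs' hq).mpr ((brel_iff hs hq).mp h.1), h.2⟩

lemma reduce_of_alt {l : List Λ} (h : altL l) : FreeGroup.reduce l = l := by
  induction l with
  | nil => rfl
  | cons x t ih =>
    have ht : altL t := h.tail
    rw [FreeGroup.reduce.cons, ih ht]
    cases t with
    | nil => rfl
    | cons c t' =>
      have hx : x.1 ≠ c.1 := (List.isChain_cons_cons.mp h).1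
      simp only []
      rw [if_neg (by rintro ⟨h1, -⟩; exact hx h1)]


lemma char_nil {d} : GoodDec [] d ↔ d = ([], []) := by
  obtain ⟨y0, bs⟩ := d
  constructor
  · rintro ⟨hy0, hcl, -, -, -, heq⟩
    have h := heq.symm
    rw [List.append_eq_nil_iff] at h
    have hb : bs = [] := flatten_nil hcl (by simpa using h.2)
    have ha : y0 = [] := h.1
    rw [ha, hb]
  · rintro ⟨rfl, rfl⟩
    exact ⟨Or.inl rfl, by simp, by simp, by simp, List.isChain_nil, rfl⟩

lemma char_b {β : Bool} {t : List Λ} {d} :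
    GoodDec (((1:Fin 2), β) :: t) d ↔
      ∃ bs, d = ([((1:Fin 2), β)], bs) ∧ GoodDec t ([], bs) := by
  constructor
  · obtain ⟨y0, bs⟩ := d
    rintro ⟨hy0, hcl, hdl, hgl, hch, heq⟩
    have hy : y0 = [((1:Fin 2), β)] := y_forced hy0 hcl heq rfl
    subst hy
    have ht : t = (bs.map fun p => p.1 ++ p.2).flatten := by
      rw [List.cons_append, List.nil_append] at heq
      exact (List.cons_eq_cons.mp heq).2
    exact ⟨bs, rfl, Or.inl rfl, hcl, hdl, hgl, hch, by simpa using ht⟩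
  · rintro ⟨bs, rfl, -, hcl, hdl, hgl, hch, heq⟩
    refine ⟨Or.inr ⟨β, rfl⟩, hcl, hdl, hgl, hch, ?_⟩
    rw [List.nil_append] at heq
    rw [List.cons_append, List.nil_append, ← heq]

lemma char_a_nil {ε : Bool} {d} :
    GoodDec [((0:Fin 2), ε)] d ↔ d = ([], [([((0:Fin 2), ε)], [])]) := by
  constructor
  · obtain ⟨y0, bs⟩ := d
    intro hd
    obtain ⟨hy0, -⟩ := good_head_a hd rfl
    subst hy0
    obtain ⟨s, y, bs', rfl, hc⟩ := good_first_block hd rfl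
    obtain ⟨-, hcl, -, -, -, heq⟩ := hd
    simp only [List.nil_append, List.map_cons, List.flatten_cons, List.append_assoc] at heq
    cases s with
    | nil => exact absurd rfl (inClass_ne_nil hc)
    | cons a s₀ =>
      rw [List.cons_append] at heq
      obtain ⟨ha, h2⟩ := List.cons_eq_cons.mp heq
      have h2' := h2.symm
      rw [List.append_eq_nil_iff, List.append_eq_nil_iff] at h2'
      obtain ⟨rfl, rfl, hfl⟩ := h2'
      have : bs' = [] := flatten_nil (fun p hp => hcl p (List.mem_cons_of_mem _ hp)) hfl
      cases ha
      subst this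
      rfl
  · rintro rfl
    refine ⟨Or.inl rfl, ?_, by simp, ?_, List.isChain_singleton _, by simp⟩
    · rintro p hp
      simp only [List.mem_singleton] at hp
      subst hp
      exact ⟨ε, singleton_class ε⟩
    · rintro p hp
      simp only [List.getLast?_singleton, Option.mem_some_iff] at hp
      subst hp
      exact Or.inl rfl


lemma char_a_short {ε β : Bool} {rest : List Λ} {d}
    (hr : rest.head? ≠ some ((0:Fin 2), ε)) :
    GoodDec (((0:Fin 2), ε) :: ((1:Fin 2), β) :: rest) d ↔
      ∃ bs, d = ([], ([((0:Fin 2), ε)], [((1:Fin 2), β)]) :: bs) ∧ GoodDec rest ([], bs) := by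
  constructor
  · obtain ⟨y0, bs⟩ := d
    intro hd
    obtain ⟨hy0, -⟩ := good_head_a hd rfl
    subst hy0
    obtain ⟨s, y, bs', rfl, hc⟩ := good_first_block hd rfl
    obtain ⟨-, hcl, hdl, hgl, hch, heq⟩ := hd
    simp only [List.nil_append, List.map_cons, List.flatten_cons, List.append_assoc] at heq
    have hs : s = [((0:Fin 2), ε)] := by
      cases s with
      | nil => exact absurd rfl (inClass_ne_nil hc)
      | cons a s₀ =>
        rw [List.cons_append] at heq
        obtain ⟨ha, h2⟩ := List.cons_eq_cons.mp heq
        cases s₀ with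
        | nil => rw [ha]
        | cons c s₁ =>
          exfalso
          rw [List.cons_append] at h2
          obtain ⟨hcc, h3⟩ := List.cons_eq_cons.mp h2
          cases s₁ with
          | nil =>
            have hgg := hc.2.2.1
            rw [List.getLast?_cons_cons] at hgg
            rw [← hcc] at hgg
            simp at hgg
          | cons e s₂ =>
            rw [List.cons_append] at h3
            obtain ⟨e1, e2⟩ := e
            have hce : c.1 ≠ e1 := (List.isChain_cons_cons.mp (List.isChain_cons_cons.mp hc.1).2).1
            rw [← hcc] at hce
            have he1 : e1 = 0 := by
              rcases fin2 e1 with h | h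
              · exact h
              · exact absurd h.symm hce
            subst he1
            have hne : ((0:Fin 2), e2) ≠ ((0:Fin 2), !ε) := by
              intro hcon
              exact hc.2.2.2 (hcon ▸ (by simp : ((0:Fin 2), e2) ∈ a :: c :: ((0:Fin 2), e2) :: s₂))
            have he2 : e2 = ε := by
              cases e2 <;> cases ε <;> simp_all
            subst he2
            exact hr (by rw [h3]; rfl)
    subst hs
    rw [List.singleton_append] at heq
    have h2 := (List.cons_eq_cons.mp heq).2
    have hyor : y = [] ∨ isB y := by
      cases bs' with
      | nil => exact hgl ([((0:Fin 2), ε)], y) (by simp)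
      | cons q l => exact Or.inr (hdl _ (by rw [List.dropLast_cons₂]; exact List.mem_cons_self))
    have hy : y = [((1:Fin 2), β)] :=
      y_forced hyor (fun p hp => hcl p (List.mem_cons_of_mem _ hp)) h2 rfl
    subst hy
    rw [List.singleton_append] at h2
    have h3 := (List.cons_eq_cons.mp h2).2
    refine ⟨bs', rfl, Or.inl rfl, fun p hp => hcl p (List.mem_cons_of_mem _ hp),
      fun p hp => hdl p (mem_dropLast_cons hp), ?_, hch.tail, by simpa using h3⟩
    intro p hp
    apply hgl
    cases bs' with
    | nil => simp at hp
    | cons q l => rwa [List.getLast?_cons_cons]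
  · rintro ⟨bs, rfl, -, hcl, hdl, hgl, hch, heq⟩
    rw [List.nil_append] at heq
    refine ⟨Or.inl rfl, ?_, ?_, ?_, ?_, ?_⟩
    · rintro p hp
      rcases List.mem_cons.mp hp with rfl | hp
      · exact ⟨ε, singleton_class ε⟩
      · exact hcl p hp
    · intro p hp
      cases bs with
      | nil => simp at hp
      | cons q l =>
        rw [List.dropLast_cons₂] at hp
        rcases List.mem_cons.mp hp with rfl | hp
        · exact ⟨β, rfl⟩
        · exact hdl p hp
    · intro p hp
      cases bs with
      | nil =>
        simp only [List.getLast?_singleton, Option.mem_some_iff] at hp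
        subst hp
        exact Or.inr ⟨β, rfl⟩
      | cons q l =>
        rw [List.getLast?_cons_cons] at hp
        exact hgl p hp
    · refine hch.cons ?_
      intro q hq
      cases bs with
      | nil => simp at hq
      | cons q' l =>
        simp only [List.head?_cons, Option.mem_some_iff] at hq
        subst hq
        obtain ⟨δ, hcq⟩ := hcl q' (List.mem_cons_self)
        have hh : rest.head? = q'.1.head? := by
          rw [heq, List.map_cons, List.flatten_cons, List.append_assoc]
          exact List.head?_append_of_ne_nil _ (inClass_ne_nil hcq)
        rw [inClass_head hcq] at hh
        have hδ : δ = !ε := by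
          have hne : ¬(δ = ε) := fun h => hr (h ▸ hh)
          cases δ <;> cases ε <;> simp_all
        exact (brel_iff (singleton_class ε) hcq).mpr (by rw [hδ]; simp)
    · simp only [List.map_cons, List.flatten_cons, List.nil_append, List.append_assoc,
        List.singleton_append]
      rw [← heq]
      rfl


lemma char_a_long {ε β : Bool} {rest : List Λ} {d}
    (hr : rest.head? = some ((0:Fin 2), ε)) :
    GoodDec (((0:Fin 2), ε) :: ((1:Fin 2), β) :: rest) d ↔
      ∃ s' y bs, d = ([], (((0:Fin 2), ε) :: ((1:Fin 2), β) :: s', y) :: bs) ∧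
        GoodDec rest ([], (s', y) :: bs) := by
  constructor
  · obtain ⟨y0, bs⟩ := d
    intro hd
    obtain ⟨hy0, -⟩ := good_head_a hd rfl
    subst hy0
    obtain ⟨s, y, bs', rfl, hc⟩ := good_first_block hd rfl
    obtain ⟨-, hcl, hdl, hgl, hch, heq⟩ := hd
    simp only [List.nil_append, List.map_cons, List.flatten_cons, List.append_assoc] at heq
    cases s with
    | nil => exact absurd rfl (inClass_ne_nil hc)
    | cons a s₀ =>
      rw [List.cons_append] at heq
      obtain ⟨ha, h2⟩ := List.cons_eq_cons.mp heq
      cases s₀ with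
      | nil =>
        exfalso
        have hyor : y = [] ∨ isB y := by
          cases bs' with
          | nil => exact hgl ([a], y) (by simp)
          | cons q l =>
            exact Or.inr (hdl _ (by rw [List.dropLast_cons₂]; exact List.mem_cons_self))
        have hy : y = [((1:Fin 2), β)] :=
          y_forced hyor (fun p hp => hcl p (List.mem_cons_of_mem _ hp)) h2 rfl
        subst hy
        rw [List.singleton_append] at h2
        have h3 := (List.cons_eq_cons.mp h2).2
        cases bs' with
        | nil => rw [h3] at hr; simp at hr
        | cons q l =>
          obtain ⟨δ, hcq⟩ := hcl q (by simp)
          have hh : rest.head? = q.1.head? := by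
            rw [h3, List.map_cons, List.flatten_cons, List.append_assoc]
            exact List.head?_append_of_ne_nil _ (inClass_ne_nil hcq)
          rw [inClass_head hcq, hr] at hh
          have hδ : ε = δ := by simpa using hh
          subst hδ
          have hb := (List.isChain_cons_cons.mp hch).1
          have := (brel_iff hc hcq).mp hb
          simp at this
      | cons c s₁ =>
        rw [List.cons_append] at h2
        obtain ⟨hcc, h3⟩ := List.cons_eq_cons.mp h2
        cases s₁ with
        | nil =>
          exfalso
          have hgg := hc.2.2.1
          rw [List.getLast?_cons_cons] at hgg
          rw [← hcc] at hgg
          simp at hgg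
        | cons e s₂ =>
          rw [List.cons_append] at h3
          have he : e = ((0:Fin 2), ε) := by
            have hre : rest.head? = some e := by rw [h3]; rfl
            rw [hr] at hre
            exact (Option.some_inj.mp hre).symm
          subst he
          have hcs' : inClass ε (((0:Fin 2), ε) :: s₂) := by
            refine ⟨(hc.1.tail).tail, rfl, ?_, ?_⟩
            · have hgg := hc.2.2.1
              rw [List.getLast?_cons_cons, List.getLast?_cons_cons] at hgg
              exact hgg
            · intro hm
              exact hc.2.2.2 (List.mem_cons_of_mem _ (List.mem_cons_of_mem _ hm))
          refine ⟨((0:Fin 2), ε) :: s₂, y, bs', by rw [← ha, ← hcc], ?_⟩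
          refine ⟨Or.inl rfl, ?_, ?_, ?_, ?_, ?_⟩
          · rintro p hp
            rcases List.mem_cons.mp hp with rfl | hp
            · exact ⟨ε, hcs'⟩
            · exact hcl p (List.mem_cons_of_mem _ hp)
          · intro p hp
            cases bs' with
            | nil => simp at hp
            | cons q l =>
              rw [List.dropLast_cons₂] at hp
              rcases List.mem_cons.mp hp with rfl | hp
              · exact hdl (a :: c :: ((0:Fin 2), ε) :: s₂, y)
                  (by rw [List.dropLast_cons₂]; exact List.mem_cons_self)
              · exact hdl p (mem_dropLast_cons hp)
          · intro p hp
            cases bs' with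
            | nil =>
              simp only [List.getLast?_singleton, Option.mem_some_iff] at hp
              subst hp
              exact hgl (a :: c :: ((0:Fin 2), ε) :: s₂, y) (by simp)
            | cons q l =>
              rw [List.getLast?_cons_cons] at hp
              exact hgl p (by rwa [List.getLast?_cons_cons])
          · exact chain_congr hc hcs' (fun p hp => hcl p (List.mem_cons_of_mem _ hp)) hch
          · simpa using h3
  · rintro ⟨s', y, bs, rfl, -, hcl, hdl, hgl, hch, heq⟩
    rw [List.nil_append] at heq
    simp only [List.map_cons, List.flatten_cons, List.append_assoc] at heq
    obtain ⟨δ, hcq⟩ := hcl (s', y) (List.mem_cons_self)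
    have hh : rest.head? = s'.head? := by
      rw [heq]
      exact List.head?_append_of_ne_nil _ (inClass_ne_nil hcq)
    have hcs' : inClass ε s' := class_of_head hcq (by rw [← hh, hr])
    have hs'ne := inClass_ne_nil hcs'
    have hcs : inClass ε (((0:Fin 2), ε) :: ((1:Fin 2), β) :: s') := by
      refine ⟨?_, rfl, ?_, ?_⟩
      · refine List.IsChain.cons (List.IsChain.cons hcs'.1 ?_) ?_
        · intro q hq
          rw [inClass_head hcs'] at hq
          simp only [Option.mem_some_iff] at hq
          subst hq
          simp
        · intro q hq
          simp only [List.head?_cons, Option.mem_some_iff] at hq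
          subst hq
          simp
      · cases s' with
        | nil => exact absurd rfl hs'ne
        | cons e s₂ =>
          rw [List.getLast?_cons_cons, List.getLast?_cons_cons]
          exact hcs'.2.2.1
      · simp only [List.mem_cons, not_or]
        exact ⟨by simp, by simp, hcs'.2.2.2⟩
    refine ⟨Or.inl rfl, ?_, ?_, ?_, ?_, ?_⟩
    · rintro p hp
      rcases List.mem_cons.mp hp with rfl | hp
      · exact ⟨ε, hcs⟩
      · exact hcl p (List.mem_cons_of_mem _ hp)
    · intro p hp
      cases bs with
      | nil => simp at hp
      | cons q l =>
        rw [List.dropLast_cons₂] at hp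
        rcases List.mem_cons.mp hp with rfl | hp
        · exact hdl (s', y) (by rw [List.dropLast_cons₂]; exact List.mem_cons_self)
        · exact hdl p (mem_dropLast_cons hp)
    · intro p hp
      cases bs with
      | nil =>
        simp only [List.getLast?_singleton, Option.mem_some_iff] at hp
        subst hp
        exact hgl (s', y) (by simp)
      | cons q l =>
        rw [List.getLast?_cons_cons] at hp
        exact hgl p (by rwa [List.getLast?_cons_cons])
    · exact chain_congr hcs' hcs (fun p hp => hcl p (List.mem_cons_of_mem _ hp)) hch
    · simp only [List.map_cons, List.flatten_cons, List.nil_append, List.append_assoc,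
        List.cons_append]
      rw [← heq]


theorem existsUnique_goodDec : ∀ (n : ℕ) (w : List Λ), w.length ≤ n → altL w →
    ∃! d, GoodDec w d := by
  intro n
  induction n with
  | zero =>
    intro w hlen _
    have hw : w = [] := List.eq_nil_of_length_eq_zero (Nat.le_zero.mp hlen)
    subst hw
    exact ⟨([], []), char_nil.mpr rfl, fun d hd => char_nil.mp hd⟩
  | succ n IH =>
    intro w hlen hw
    cases w with
    | nil => exact ⟨([], []), char_nil.mpr rfl, fun d hd => char_nil.mp hd⟩
    | cons x t =>
      obtain ⟨x1, x2⟩ := x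
      rcases fin2 x1 with rfl | rfl
      · -- head is an a-letter
        cases t with
        | nil => exact ⟨_, char_a_nil.mpr rfl, fun d hd => char_a_nil.mp hd⟩
        | cons c t₂ =>
          obtain ⟨c1, β⟩ := c
          have hc1 : c1 = 1 := by
            have hne : ((0:Fin 2), x2).1 ≠ ((c1, β) : Λ).1 := (List.isChain_cons_cons.mp hw).1
            rcases fin2 c1 with rfl | rfl
            · exact absurd rfl (Ne.symm hne)
            · rfl
          subst hc1
          have ht₂ : altL t₂ := (hw.tail).tail
          have hlen₂ : t₂.length ≤ n := by simp at hlen; omega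
          obtain ⟨d', hd', hu'⟩ := IH t₂ hlen₂ ht₂
          obtain ⟨y0', bs'⟩ := d'
          by_cases hr : t₂.head? = some ((0:Fin 2), x2)
          · -- long case
            obtain ⟨hy0', hbs'ne⟩ := good_head_a hd' hr
            subst hy0'
            cases bs' with
            | nil => exact absurd rfl hbs'ne
            | cons p bs'' =>
              obtain ⟨s'', y''⟩ := p
              refine ⟨([], (((0:Fin 2), x2) :: ((1:Fin 2), β) :: s'', y'') :: bs''),
                (char_a_long hr).mpr ⟨s'', y'', bs'', rfl, hd'⟩, ?_⟩
              intro d hd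
              obtain ⟨s', y, bs, rfl, hG⟩ := (char_a_long hr).mp hd
              have heq := hu' ([], (s', y) :: bs) hG
              have h2 : (s', y) :: bs = (s'', y'') :: bs'' := congrArg Prod.snd heq
              obtain ⟨h3, h4⟩ := List.cons_eq_cons.mp h2
              obtain ⟨h5, h6⟩ := Prod.mk.inj h3
              subst h4; subst h5; subst h6
              rfl
          · -- short case
            have hy0' : y0' = [] := by
              cases t₂ with
              | nil => exact congrArg Prod.fst (char_nil.mp hd')
              | cons e t₃ =>
                obtain ⟨e1, σ⟩ := e
                have hne : ((1:Fin 2), β).1 ≠ ((e1, σ) : Λ).1 :=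
                  (List.isChain_cons_cons.mp hw.tail).1
                have he1 : e1 = 0 := by
                  rcases fin2 e1 with rfl | rfl
                  · rfl
                  · exact absurd rfl (Ne.symm hne)
                subst he1
                exact (good_head_a hd' rfl).1
            subst hy0'
            refine ⟨([], ([((0:Fin 2), x2)], [((1:Fin 2), β)]) :: bs'),
              (char_a_short hr).mpr ⟨bs', rfl, hd'⟩, ?_⟩
            intro d hd
            obtain ⟨bs, rfl, hG⟩ := (char_a_short hr).mp hd
            have heq := hu' ([], bs) hG
            have h2 : bs = bs' := congrArg Prod.snd heq
            rw [h2]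
      · -- head is a b-letter
        have ht : altL t := hw.tail
        have hlent : t.length ≤ n := by simp at hlen; omega
        obtain ⟨d', hd', hu'⟩ := IH t hlent ht
        obtain ⟨y0', bs'⟩ := d'
        have hy0' : y0' = [] := by
          cases t with
          | nil => exact congrArg Prod.fst (char_nil.mp hd')
          | cons e t₃ =>
            obtain ⟨e1, σ⟩ := e
            have hne : ((1:Fin 2), x2).1 ≠ ((e1, σ) : Λ).1 := (List.isChain_cons_cons.mp hw).1
            have he1 : e1 = 0 := by
              rcases fin2 e1 with rfl | rfl
              · rfl
              · exact absurd rfl (Ne.symm hne)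
            subst he1
            exact (good_head_a hd' rfl).1
        subst hy0'
        refine ⟨([((1:Fin 2), x2)], bs'), char_b.mpr ⟨bs', rfl, hd'⟩, ?_⟩
        intro d hd
        obtain ⟨bs, rfl, hG⟩ := char_b.mp hd
        have heq := hu' ([], bs) hG
        have h2 : bs = bs' := congrArg Prod.snd heq
        rw [h2]

theorem goodDec_existsUnique (w : List Λ) (hw : altL w) : ∃! d, GoodDec w d :=
  existsUnique_goodDec w.length w le_rfl hw


lemma toWord_mk_alt {l : List Λ} (h : altL l) : (FreeGroup.mk l).toWord = l := by
  rw [FreeGroup.toWord_mk, reduce_of_alt h]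

lemma toWord_mk_yor {y : List Λ} (h : y = [] ∨ isB y) : (FreeGroup.mk y).toWord = y := by
  rcases h with rfl | ⟨β, rfl⟩
  · rw [FreeGroup.toWord_mk]; rfl
  · rw [FreeGroup.toWord_mk]; rfl

lemma mem_SaP_iff {v : W} : v ∈ SaP ↔ inClass true v.toWord := Iff.rfl

lemma mem_SaN_iff {v : W} : v ∈ SaN ↔ inClass false v.toWord := Iff.rfl

lemma mem_union_iff {v : W} : v ∈ SaP ∪ SaN ↔ ∃ ε, inClass ε v.toWord := by
  constructor
  · rintro (h | h)
    · exact ⟨true, mem_SaP_iff.mp h⟩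
    · exact ⟨false, mem_SaN_iff.mp h⟩
  · rintro ⟨ε, h⟩
    cases ε
    · exact Or.inr (mem_SaN_iff.mpr h)
    · exact Or.inl (mem_SaP_iff.mpr h)

lemma mem_Blet_iff {v : W} : v ∈ Blet ↔ isB v.toWord := by
  constructor
  · rintro (rfl | rfl)
    · exact ⟨true, toWord_mk_yor (Or.inr ⟨true, rfl⟩)⟩
    · exact ⟨false, toWord_mk_yor (Or.inr ⟨false, rfl⟩)⟩
  · rintro ⟨β, hβ⟩
    have hv : v = FreeGroup.mk [((1:Fin 2), β)] := by rw [← hβ, FreeGroup.mk_toWord]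
    cases β
    · exact Or.inr hv
    · exact Or.inl hv

def F (d : ADecompData) : List Λ × List Blk :=
  ((d.2.2 0).toWord, List.ofFn fun i : Fin d.1 => ((d.2.1 i).toWord, (d.2.2 i.succ).toWord))

lemma F_inj {d e : ADecompData} (h : F d = F e) : d = e := by
  obtain ⟨l, S, Y⟩ := d
  obtain ⟨l', S', Y'⟩ := e
  have h1 : (Y 0).toWord = (Y' 0).toWord := congrArg Prod.fst h
  have h2 := congrArg Prod.snd h
  simp only [F] at h2
  have hl : l = l' := by
    have := congrArg List.length h2
    simpa using this
  subst hl
  rw [List.ofFn_inj] at h2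
  have hS : S = S' := by
    funext i
    exact FreeGroup.toWord_injective (congrArg Prod.fst (congrFun h2 i))
  have hY : Y = Y' := by
    funext i
    induction i using Fin.cases with
    | zero => exact FreeGroup.toWord_injective h1
    | succ j => exact FreeGroup.toWord_injective (congrArg Prod.snd (congrFun h2 j))
  rw [hS, hY]

lemma good_of_isADecomp {w : W} {d : ADecompData} (h : IsADecomp w d) :
    GoodDec w.toWord (F d) := by
  obtain ⟨l, S, Y⟩ := d
  obtain ⟨h1, h2, h3, h4, h5⟩ := h
  dsimp only at h1 h2 h3 h4 h5
  simp only [F]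
  refine ⟨?_, ?_, ?_, ?_, ?_, ?_⟩
  · dsimp only
    rcases h2 0 (Or.inl rfl) with h | h
    · exact Or.inl (by rw [h, FreeGroup.toWord_one])
    · exact Or.inr (mem_Blet_iff.mp h)
  · dsimp only
    rintro p hp
    obtain ⟨i, rfl⟩ := List.mem_ofFn.mp hp
    exact mem_union_iff.mp (h1 i)
  · dsimp only
    intro p hp
    obtain ⟨j, hj, hjp⟩ := List.mem_iff_getElem.mp hp
    have hj' : j < l - 1 := by simpa using hj
    rw [List.getElem_dropLast, List.getElem_ofFn] at hjp
    subst hjp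
    exact mem_Blet_iff.mp (h3 (Fin.succ ⟨j, by omega⟩) (by simp) (by simp; omega))
  · dsimp only
    intro p hp
    cases l with
    | zero => simp at hp
    | succ m =>
      set L := List.ofFn fun i : Fin (m+1) => ((S i).toWord, (Y i.succ).toWord) with hL
      have hlL : L.length = m + 1 := by simp [hL]
      have hlast : L.getLast? = some (L[m]'(by omega)) := by
        have hl2 : L.length - 1 < L.length := by omega
        have := L.getLast?_eq_getElem?.trans (List.getElem?_eq_getElem hl2)
        simpa [hlL] using this
      rw [hlast] at hp
      simp only [Option.mem_some_iff] at hp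
      subst hp
      rw [List.getElem_ofFn]
      rcases h2 (Fin.succ ⟨m, by omega⟩) (Or.inr (by simp)) with h | h
      · exact Or.inl (by rw [h, FreeGroup.toWord_one])
      · exact Or.inr (mem_Blet_iff.mp h)
  · dsimp only
    simp only [List.Chain', List.isChain_iff_getElem]
    intro i hi
    simp only [List.length_ofFn] at hi
    simp only [List.get_eq_getElem, List.getElem_ofFn]
    have h4' := h4 i (by omega)
    constructor
    · intro hc
      exact mem_SaN_iff.mp (h4'.mp (mem_SaP_iff.mpr hc))
    · intro hc
      exact mem_SaP_iff.mp (h4'.mpr (mem_SaN_iff.mpr hc))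
  · dsimp only
    rw [List.map_ofFn]
    exact h5

lemma exists_isADecomp {w : W} {g} (hG : GoodDec w.toWord g) :
    ∃ d : ADecompData, IsADecomp w d ∧ F d = g := by
  obtain ⟨y0, bs⟩ := g
  obtain ⟨hy0, hcl, hdl, hgl, hch, heq⟩ := hG
  dsimp only at hy0 hcl hdl hgl hch heq
  have hyor : ∀ j : Fin bs.length, (bs.get j).2 = [] ∨ isB (bs.get j).2 := by
    intro j
    by_cases hj : (j : ℕ) = bs.length - 1
    · have hne : bs ≠ [] := by
        intro hc
        rw [hc] at j
        exact absurd j.2 (by simp)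
      have hl2 : bs.length - 1 < bs.length := by
        have := j.2; omega
      have hlast : bs.getLast? = some (bs[bs.length - 1]'hl2) :=
        bs.getLast?_eq_getElem?.trans (List.getElem?_eq_getElem hl2)
      have hj' : j = ⟨bs.length - 1, hl2⟩ := Fin.ext hj
      rw [hj']
      simp only [List.get_eq_getElem]
      exact hgl _ (by rw [hlast]; rfl)
    · refine Or.inr (hdl (bs.get j) ?_)
      refine List.mem_iff_getElem.mpr ⟨j, ?_, ?_⟩
      · rw [List.length_dropLast]
        have := j.2; omega
      · rw [List.getElem_dropLast]
        simp
  have hsw : ∀ i : Fin bs.length, (FreeGroup.mk (bs.get i).1).toWord = (bs.get i).1 := by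
    intro i
    obtain ⟨ε, hc⟩ := hcl (bs.get i) (List.get_mem bs i)
    exact toWord_mk_alt hc.1
  have hyw : ∀ j : Fin bs.length, (FreeGroup.mk (bs.get j).2).toWord = (bs.get j).2 :=
    fun j => toWord_mk_yor (hyor j)
  have hy0w : (FreeGroup.mk y0).toWord = y0 := toWord_mk_yor hy0
  refine ⟨⟨bs.length, fun i => FreeGroup.mk (bs.get i).1,
    Fin.cases (FreeGroup.mk y0) (fun j => FreeGroup.mk (bs.get j).2)⟩, ⟨?_, ?_, ?_, ?_, ?_⟩, ?_⟩
  · intro i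
    obtain ⟨ε, hc⟩ := hcl (bs.get i) (List.get_mem bs i)
    exact mem_union_iff.mpr ⟨ε, by rw [hsw i]; exact hc⟩
  · dsimp only
    intro i hi
    induction i using Fin.cases with
    | zero =>
      simp only [Fin.cases_zero]
      rcases hy0 with rfl | ⟨β, rfl⟩
      · exact Or.inl FreeGroup.one_eq_mk.symm
      · refine Or.inr ?_
        cases β
        · exact Or.inr rfl
        · exact Or.inl rfl
    | succ j =>
      simp only [Fin.cases_succ]
      rcases hyor j with hj | ⟨β, hj⟩
      · exact Or.inl (by rw [hj]; exact FreeGroup.one_eq_mk.symm)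
      · refine Or.inr ?_
        rw [hj]
        cases β
        · exact Or.inr rfl
        · exact Or.inl rfl
  · dsimp only
    intro i hi0 hil
    induction i using Fin.cases with
    | zero => exact absurd rfl hi0
    | succ j =>
      simp only [Fin.cases_succ]
      have hj : (j : ℕ) < bs.length - 1 := by
        have h1 : (j : ℕ) + 1 ≠ bs.length := by simpa using hil
        have := j.2
        omega
      have hmem : bs.get j ∈ bs.dropLast := by
        refine List.mem_iff_getElem.mpr ⟨j, ?_, ?_⟩
        · rw [List.length_dropLast]; omega
        · rw [List.getElem_dropLast]; simp
      obtain ⟨β, hβ⟩ := hdl _ hmem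
      rw [hβ]
      cases β
      · exact Or.inr rfl
      · exact Or.inl rfl
  · dsimp only
    intro i hilt
    have hb : brel (bs.get ⟨i, Nat.lt_of_succ_lt hilt⟩) (bs.get ⟨i+1, hilt⟩) :=
      (List.isChain_iff_getElem.mp hch) i (by omega)
    constructor
    · intro hc
      exact mem_SaN_iff.mpr (by rw [hsw]; exact hb.mp (by rw [← hsw ⟨i, Nat.lt_of_succ_lt hilt⟩]; exact mem_SaP_iff.mp hc))
    · intro hc
      exact mem_SaP_iff.mpr (by rw [hsw]; exact hb.mpr (by rw [← hsw ⟨i+1, hilt⟩]; exact mem_SaN_iff.mp hc))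
  · have hof : (List.ofFn fun i : Fin bs.length =>
        (FreeGroup.mk (bs.get i).1).toWord ++
          ((Fin.cases (motive := fun _ => W) (FreeGroup.mk y0)
            (fun j => FreeGroup.mk (bs.get j).2)) i.succ).toWord)
        = bs.map fun p => p.1 ++ p.2 := by
      refine List.ext_getElem (by simp) ?_
      intro i hi1 hi2
      simp only [List.getElem_ofFn, Fin.cases_succ, List.getElem_map]
      rw [hsw, hyw]
      rfl
    dsimp only
    simp only [Fin.cases_zero]
    rw [hof, hy0w]
    exact heq
  · simp only [F]
    refine Prod.ext ?_ ?_
    · simpa using hy0w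
    · simp only []
      refine List.ext_getElem (by simp) ?_
      intro i hi1 hi2
      simp only [List.getElem_ofFn, Fin.cases_succ]
      rw [hsw, hyw]
      exact Prod.mk.eta

end ADecompAux


/-- **Proposition (a-decomposition).** Every alternating word `w ∈ 𝒜` admits a unique
`a`-decomposition `w = y₀ s₁ y₁ s₂ ⋯ y_{l-1} s_l y_l`. -/
theorem adecomp_existsUnique (w : W) (hw : w ∈ Alt) :
    ∃! d : ADecompData, IsADecomp w d := by
  obtain ⟨g, hg, hu⟩ := ADecompAux.goodDec_existsUnique w.toWord hw
  obtain ⟨d₀, hd₀, hF₀⟩ := ADecompAux.exists_isADecomp hg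
  refine ⟨d₀, hd₀, fun d hd => ?_⟩
  have h1 := ADecompAux.good_of_isADecomp hd
  have h2 : ADecompAux.F d = ADecompAux.F d₀ := (hu _ h1).trans hF₀.symm
  exact ADecompAux.F_inj h2
end

section
/- The maps α, β : 𝒜 → 𝒜 satisfy: (1) α(w⁻¹) = α(w)⁻¹ and β(w⁻¹) = β(w)⁻¹ for all w ∈ 𝒜; (2) ψ∘α = β∘ψ and ψ∘β = α∘ψ, where ψ is the automorphism of F₂ interchanging a and b; (3) α(α(w)) = α(w) and |α(w)| ≤ |w| with equality if and only if α(w) = w, and analogously for β; (4) if v₁ x v₂ is an alternating word with v₁, v₂ ∈ 𝒜 and x ∈ {a, a⁻¹}, then α(v₁ x v₂) is equal in F₂ to the (possibly non-reduced) product α(v₁ x)·x⁻¹·α(x v₂), and analogously for β with x ∈ {b, b⁻¹}. -/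
open FreeGroup

/-- The word map underlying `α`: repeatedly merge two consecutive `a`-letters of the
same sign across the single `b`-letter separating them (replacing each block of the
`a`-decomposition lying in `S_a⁺` by `a` and each block in `S_a⁻` by `a⁻¹`). -/
def goA : List (Fin 2 × Bool) → List (Fin 2 × Bool)
  | x :: y :: z :: rest =>
      if x.1 = 0 ∧ y.1 = 1 ∧ z.1 = 0 ∧ x.2 = z.2 then goA (x :: rest)
      else x :: goA (y :: z :: rest)
  | l => l
termination_by l => l.length

/-- The word map underlying `β`. -/
def goB : List (Fin 2 × Bool) → List (Fin 2 × Bool)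
  | x :: y :: z :: rest =>
      if x.1 = 1 ∧ y.1 = 0 ∧ z.1 = 1 ∧ x.2 = z.2 then goB (x :: rest)
      else x :: goB (y :: z :: rest)
  | l => l
termination_by l => l.length

/-- The map `α : 𝒜 → 𝒜`. -/
def alphaF (w : W) : W := FreeGroup.mk (goA w.toWord)

/-- The map `β : 𝒜 → 𝒜`. -/
def betaF (w : W) : W := FreeGroup.mk (goB w.toWord)

/-- The automorphism `ψ` of `F₂` interchanging the generators `a` and `b`. -/
def psiF : W →* W := FreeGroup.map (fun i : Fin 2 => if i = 0 then 1 else 0)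

/-- The single letter `x^s` for generator `x` of index `i` and sign `s`. -/
def letter (i : Fin 2) (s : Bool) : W := FreeGroup.mk [(i, s)]

abbrev Ltr := Fin 2 × Bool

def AltL (l : List Ltr) : Prop := List.Chain' (fun p q : Ltr => p.1 ≠ q.1) l

def mrg (x y z : Ltr) : Prop := x.1 = 0 ∧ y.1 = 1 ∧ z.1 = 0 ∧ x.2 = z.2

instance : ∀ x y z : Ltr, Decidable (mrg x y z) := fun _ _ _ => by unfold mrg; infer_instance

lemma goA_nil : goA [] = [] := by rw [goA]; simp
lemma goA_one (x : Ltr) : goA [x] = [x] := by rw [goA]; simp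
lemma goA_two (x y : Ltr) : goA [x,y] = [x,y] := by rw [goA]; simp

lemma goA_pos {x y z : Ltr} (r : List Ltr) (h : mrg x y z) :
    goA (x::y::z::r) = goA (x :: r) := by rw [goA]; exact if_pos h

lemma goA_neg {x y z : Ltr} (r : List Ltr) (h : ¬ mrg x y z) :
    goA (x::y::z::r) = x :: goA (y :: z :: r) := by rw [goA]; exact if_neg h

lemma goA_short (l : List Ltr) (h : l.length ≤ 2) : goA l = l := by
  match l, h with
  | [], _ => exact goA_nil
  | [x], _ => exact goA_one x
  | [x,y], _ => exact goA_two x y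

lemma len_le_two_of_no3 {l : List Ltr}
    (h : ∀ (x y z : Ltr) (rest : List Ltr), l = x :: y :: z :: rest → False) :
    l.length ≤ 2 := by
  rcases l with _|⟨a,_|⟨b,_|⟨c,r⟩⟩⟩ <;> simp
  exact (h a b c r rfl).elim

lemma mrg_eq {x y z : Ltr} (h : mrg x y z) : x = z := by
  obtain ⟨h1, _, h3, h4⟩ := h
  exact Prod.ext (h1.trans h3.symm) h4

lemma goA_head : ∀ (l : List Ltr) (x : Ltr) (t : List Ltr), l = x :: t →
    ∃ u, goA l = x :: u := by
  intro l
  induction l using goA.induct with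
  | case1 x y z rest h ih =>
    intro x' t' he
    obtain ⟨u, hu⟩ := ih x' rest (by cases he; rfl)
    exact ⟨u, by rw [goA_pos rest h]; cases he; exact hu⟩
  | case2 x y z rest h ih =>
    intro x' t' he
    cases he
    exact ⟨goA (y :: z :: rest), goA_neg rest h⟩
  | case3 l h =>
    intro x t he
    exact ⟨t, by rw [goA_short l (len_le_two_of_no3 h), he]⟩

lemma goA_ne_nil {l : List Ltr} (h : l ≠ []) : goA l ≠ [] := by
  rcases l with _ | ⟨x, t⟩
  · exact absurd rfl h
  · obtain ⟨u, hu⟩ := goA_head (x :: t) x t rfl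
    simp [hu]

lemma goA_getLast? : ∀ l : List Ltr, (goA l).getLast? = l.getLast? := by
  intro l
  induction l using goA.induct with
  | case1 x y z rest h ih =>
    rw [goA_pos rest h, ih]
    rcases rest with _ | ⟨a, r⟩
    · simp [mrg_eq h]
    · simp [List.getLast?_cons_cons]
  | case2 x y z rest h ih =>
    rw [goA_neg rest h]
    obtain ⟨u, hu⟩ := goA_head (y :: z :: rest) y (z :: rest) rfl
    rw [hu] at ih ⊢
    simp [List.getLast?_cons_cons] at ih ⊢
    exact ih
  | case3 l h =>
    rw [goA_short l (len_le_two_of_no3 h)]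

lemma goA_len (l : List Ltr) : (goA l).length ≤ l.length := by
  induction l using goA.induct with
  | case1 x y z rest h ih => rw [goA_pos rest h]; simp at ih ⊢; omega
  | case2 x y z rest h ih => rw [goA_neg rest h]; simpa using Nat.succ_le_succ ih
  | case3 l h => rw [goA_short l (len_le_two_of_no3 h)]

lemma goA_len_eq : ∀ l : List Ltr, (goA l).length = l.length → goA l = l := by
  intro l
  induction l using goA.induct with
  | case1 x y z rest h ih =>
    intro hl
    rw [goA_pos rest h] at hl
    have := goA_len (x :: rest)
    simp at hl this
    omega
  | case2 x y z rest h ih =>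
    intro hl
    rw [goA_neg rest h] at hl ⊢
    simp at hl
    rw [ih hl]
  | case3 l h =>
    intro _
    exact goA_short l (len_le_two_of_no3 h)

lemma goA_len1 : ∀ (l : List Ltr) (x : Ltr), goA l = [x] → l = [x] ∨ x.1 = 0 := by
  intro l
  induction l using goA.induct with
  | case1 x y z rest h ih =>
    intro x' hx
    rw [goA_pos rest h] at hx
    rcases ih x' hx with h' | h'
    · right; have : x = x' := by injection h'
      rw [← this]; exact h.1
    · right; exact h'
  | case2 x y z rest h ih =>
    intro x' hx
    rw [goA_neg rest h] at hx
    injection hx with h1 h2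
    exact absurd h2 (goA_ne_nil (by simp))
  | case3 l h =>
    intro x hx
    rw [goA_short l (len_le_two_of_no3 h)] at hx
    exact Or.inl hx

def snocA (out : List Ltr) (z : Ltr) : List Ltr :=
  match out.reverse with
  | y :: x :: _ => if mrg x y z then out.dropLast else out ++ [z]
  | _ => out ++ [z]

lemma snocA_nil (z : Ltr) : snocA [] z = [z] := rfl
lemma snocA_one (a z : Ltr) : snocA [a] z = [a, z] := rfl

lemma snocA_eq (t : List Ltr) (x y z : Ltr) :
    snocA (t ++ [x, y]) z = if mrg x y z then t ++ [x] else t ++ [x, y, z] := by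
  have hrev : (t ++ [x, y]).reverse = y :: x :: t.reverse := by simp
  have hdl : (t ++ [x, y]).dropLast = t ++ [x] := by
    rw [show t ++ [x, y] = (t ++ [x]) ++ [y] by simp]
    simp
  unfold snocA
  rw [hrev]
  simp only [hdl]
  split_ifs <;> simp

lemma two_le_rep {M : List Ltr} (h : 2 ≤ M.length) : ∃ t x y, M = t ++ [x, y] := by
  rcases hr : M.reverse with _ | ⟨y, _ | ⟨x, t⟩⟩
  · have hM : M = [] := by simpa using congrArg List.reverse hr
    rw [hM] at h; simp at h
  · have : M = [y] := by simpa using congrArg List.reverse hr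
    rw [this] at h; simp at h
  · refine ⟨t.reverse, x, y, ?_⟩
    have := congrArg List.reverse hr
    simpa using this

lemma snocA_cons (x z : Ltr) (M : List Ltr) (h : 2 ≤ M.length) :
    snocA (x :: M) z = x :: snocA M z := by
  obtain ⟨t, p, q, rfl⟩ := two_le_rep h
  rw [show x :: (t ++ [p, q]) = (x :: t) ++ [p, q] by simp, snocA_eq, snocA_eq]
  split_ifs <;> simp

lemma goA_snoc : ∀ (l : List Ltr) (z : Ltr), goA (l ++ [z]) = snocA (goA l) z := by
  intro l
  induction l using goA.induct with
  | case1 x y w rest h ih =>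
    intro z
    have : (x :: y :: w :: rest) ++ [z] = x :: y :: w :: (rest ++ [z]) := by simp
    rw [this, goA_pos _ h, goA_pos rest h, show x :: (rest ++ [z]) = (x :: rest) ++ [z] by simp,
      ih z]
  | case2 x y w rest h ih =>
    intro z
    have : (x :: y :: w :: rest) ++ [z] = x :: y :: w :: (rest ++ [z]) := by simp
    rw [this, goA_neg _ h, goA_neg rest h,
      show y :: w :: (rest ++ [z]) = (y :: w :: rest) ++ [z] by simp, ih z]
    set M := goA (y :: w :: rest) with hM
    rcases Nat.lt_or_ge M.length 2 with hlen | hlen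
    · -- M has length ≤ 1; M = [y] with y.1 = 0
      obtain ⟨u, hu⟩ := goA_head (y :: w :: rest) y (w :: rest) rfl
      rw [← hM] at hu
      have hu0 : u = [] := by
        rw [hu] at hlen; simp at hlen
        exact List.eq_nil_of_length_eq_zero (by simpa using hlen)
      rw [hu0] at hu
      have hy0 : y.1 = 0 := by
        rcases goA_len1 (y :: w :: rest) y (by rw [← hM, hu]) with h' | h'
        · simp at h'
        · exact h'
      rw [hu, show x :: [y] = ([] : List Ltr) ++ [x, y] by simp, snocA_eq, snocA_one]
      have : ¬ mrg x y z := fun hm => by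
        have : y.1 = 1 := hm.2.1
        rw [hy0] at this; exact absurd this (by decide)
      rw [if_neg this]
      simp
    · rw [snocA_cons x z M hlen]
  | case3 l h =>
    intro z
    rw [goA_short l (len_le_two_of_no3 h)]
    rcases l with _ | ⟨a, _ | ⟨b, _ | ⟨c, r⟩⟩⟩
    · rw [show ([] : List Ltr) ++ [z] = [z] by simp, goA_one, snocA_nil]
    · rw [show [a] ++ [z] = [a, z] by simp, goA_two, snocA_one]
    · rw [show [a, b] ++ [z] = a :: b :: z :: ([] : List Ltr) by simp,
        show [a, b] = ([] : List Ltr) ++ [a, b] by simp, snocA_eq]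
      by_cases hm : mrg a b z
      · rw [goA_pos _ hm, if_pos hm, goA_one]; rfl
      · rw [goA_neg _ hm, if_neg hm, goA_two]; rfl
    · exact (h a b c r rfl).elim

lemma snocA_no_mrg (M : List Ltr) (z : Ltr) (h : ∀ x y : Ltr, ¬ mrg x y z) :
    snocA M z = M ++ [z] := by
  rcases hr : M.reverse with _ | ⟨y, _ | ⟨x, t⟩⟩
  · have hM : M = [] := by simpa using congrArg List.reverse hr
    rw [hM, snocA_nil]; rfl
  · have hM : M = [y] := by simpa using congrArg List.reverse hr
    rw [hM, snocA_one]; rfl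
  · have hM : M = t.reverse ++ [x, y] := by simpa using congrArg List.reverse hr
    rw [hM, snocA_eq, if_neg (h x y)]
    simp

lemma goA_snoc_one (l : List Ltr) (z : Ltr) (hz : z.1 = 1) :
    goA (l ++ [z]) = goA l ++ [z] := by
  rw [goA_snoc]
  exact snocA_no_mrg _ _ (fun x y hm => by
    have := hm.2.2.1; rw [hz] at this; exact absurd this (by decide))

lemma fin2_ne0 {i : Fin 2} (h : i ≠ 0) : i = 1 := by omega

lemma alt_tail {x : Ltr} {l : List Ltr} (h : AltL (x :: l)) : AltL l := h.tail

lemma alt_head {x y : Ltr} {l : List Ltr} (h : AltL (x :: y :: l)) : x.1 ≠ y.1 :=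
  (List.isChain_cons_cons.mp h).1

lemma alt_cons {x y : Ltr} {l : List Ltr} (h1 : x.1 ≠ y.1) (h2 : AltL (y :: l)) :
    AltL (x :: y :: l) := List.isChain_cons_cons.mpr ⟨h1, h2⟩

lemma alt_drop2 {x y z : Ltr} {r : List Ltr} (h : AltL (x :: y :: z :: r))
    (hxz : x.1 = z.1) : AltL (x :: r) := by
  have h3 : AltL (z :: r) := (h.tail).tail
  rcases r with _ | ⟨b, r'⟩
  · exact List.isChain_singleton x
  · exact alt_cons (hxz ▸ alt_head h3) (alt_tail h3)

lemma goA_alt : ∀ l : List Ltr, AltL l → AltL (goA l) := by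
  intro l
  induction l using goA.induct with
  | case1 x y z rest h ih =>
    intro h'
    rw [goA_pos rest h]
    exact ih (alt_drop2 h' (h.1.trans h.2.2.1.symm))
  | case2 x y z rest h ih =>
    intro h'
    rw [goA_neg rest h]
    obtain ⟨u, hu⟩ := goA_head (y :: z :: rest) y (z :: rest) rfl
    rw [hu]
    refine alt_cons (alt_head h') ?_
    rw [← hu]
    exact ih (alt_tail h')
  | case3 l h =>
    intro h'
    rw [goA_short l (len_le_two_of_no3 h)]
    exact h'

lemma goA_goA : ∀ l : List Ltr, goA (goA l) = goA l := by
  intro l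
  induction l using goA.induct with
  | case1 x y z rest h ih => rw [goA_pos rest h]; exact ih
  | case2 x y z rest h ih =>
    rw [goA_neg rest h]
    obtain ⟨u, hu⟩ := goA_head (y :: z :: rest) y (z :: rest) rfl
    rw [hu] at ih ⊢
    rcases u with _ | ⟨m1, mt⟩
    · exact goA_two x y
    · have hnm : ¬ mrg x y m1 := by
        rcases rest with _ | ⟨r0, r'⟩
        · rw [goA_two] at hu
          injection hu with e1 e2; injection e2 with e2 _
          rw [← e2]; exact h
        · by_cases hm : mrg y z r0
          · intro hc
            have h1 := hc.2.1
            have h0 := hm.1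
            rw [h0] at h1; exact absurd h1 (by decide)
          · rw [goA_neg r' hm] at hu
            obtain ⟨u', hu'⟩ := goA_head (z :: r0 :: r') z (r0 :: r') rfl
            rw [hu'] at hu
            injection hu with e1 e2; injection e2 with e2 _
            rw [← e2]; exact h
      rw [goA_neg mt hnm, ih]
  | case3 l h =>
    rw [goA_short l (len_le_two_of_no3 h), goA_short l (len_le_two_of_no3 h)]

lemma eq_dropLast_concat {S : List Ltr} {c : Ltr} (h : S.getLast? = some c) :
    S = S.dropLast ++ [c] := by
  rcases hr : S.reverse with _ | ⟨y, t⟩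
  · have : S = [] := by simpa using congrArg List.reverse hr
    rw [this] at h; simp at h
  · have hS : S = t.reverse ++ [y] := by simpa using congrArg List.reverse hr
    have : y = c := by
      rw [hS] at h; simp at h; exact h
    rw [hS, this]; simp

lemma invRev_cons (x : Ltr) (l : List Ltr) :
    FreeGroup.invRev (x :: l) = FreeGroup.invRev l ++ [(x.1, !x.2)] := by
  simp [FreeGroup.invRev]

lemma invRev_altL {l : List Ltr} (h : AltL l) : AltL (FreeGroup.invRev l) := by
  unfold AltL List.Chain' FreeGroup.invRev
  rw [List.isChain_reverse, List.isChain_map]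
  exact h.imp (fun a b hab => by simpa [flip] using fun e => hab e.symm)

lemma goA_invRev : ∀ l : List Ltr, AltL l → goA (FreeGroup.invRev l) = FreeGroup.invRev (goA l) := by
  intro l
  induction l using goA.induct with
  | case1 x y z rest h ih =>
    intro h'
    have hxz : x = z := mrg_eq h
    have halt : AltL (x :: rest) := alt_drop2 h' (by rw [hxz])
    rw [goA_pos rest h, ← ih halt]
    rw [invRev_cons x (y :: z :: rest), invRev_cons y (z :: rest), invRev_cons z rest,
      invRev_cons x rest]
    set fx : Ltr := (x.1, !x.2)
    set fy : Ltr := (y.1, !y.2)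
    set fz : Ltr := (z.1, !z.2)
    have hfz : fz = fx := by show (z.1, !z.2) = (x.1, !x.2); rw [hxz]
    set S := goA (FreeGroup.invRev rest ++ [fz]) with hSdef
    have hgl : S.getLast? = some fz := by
      rw [hSdef, goA_getLast?]; simp
    have hS : S = S.dropLast ++ [fz] := eq_dropLast_concat hgl
    have hy1 : fy.1 = 1 := h.2.1
    have step1 : goA ((FreeGroup.invRev rest ++ [fz]) ++ [fy]) = S ++ [fy] :=
      goA_snoc_one _ _ hy1
    have hSfy : S ++ [fy] = S.dropLast ++ [fz, fy] := by
      nth_rewrite 1 [hS]; simp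
    have hmrg : mrg fz fy fx := ⟨h.2.2.1, hy1, h.1, by simp [fz, fx, h.2.2.2]⟩
    calc goA (FreeGroup.invRev rest ++ [fz] ++ [fy] ++ [fx])
        = snocA (goA (FreeGroup.invRev rest ++ [fz] ++ [fy])) fx := goA_snoc _ fx
      _ = snocA (S ++ [fy]) fx := by rw [step1]
      _ = snocA (S.dropLast ++ [fz, fy]) fx := by rw [hSfy]
      _ = S.dropLast ++ [fz] := by rw [snocA_eq, if_pos hmrg]
      _ = S := hS.symm
      _ = goA (FreeGroup.invRev rest ++ [fx]) := by rw [hSdef, hfz]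
  | case2 x y z rest h ih =>
    intro h'
    rw [goA_neg rest h, invRev_cons x (goA (y :: z :: rest)), ← ih (alt_tail h'),
      invRev_cons x (y :: z :: rest)]
    set fx : Ltr := (x.1, !x.2)
    by_cases hx : x.1 = 0
    · have hy1 : y.1 = 1 := fin2_ne0 (fun e => alt_head h' (hx.trans e.symm))
      have hz0 : z.1 = 0 := by
        have := alt_head (alt_tail h')
        omega
      have hxz : x.2 ≠ z.2 := fun e => h ⟨hx, hy1, hz0, e⟩
      rw [invRev_cons y (z :: rest), invRev_cons z rest]
      set fy : Ltr := (y.1, !y.2)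
      set fz : Ltr := (z.1, !z.2)
      set S := goA (FreeGroup.invRev rest ++ [fz]) with hSdef
      have hgl : S.getLast? = some fz := by
        rw [hSdef, goA_getLast?]; simp
      have hS : S = S.dropLast ++ [fz] := eq_dropLast_concat hgl
      have step1 : goA ((FreeGroup.invRev rest ++ [fz]) ++ [fy]) = S ++ [fy] :=
        goA_snoc_one _ _ (show fy.1 = 1 from hy1)
      have hSfy : S ++ [fy] = S.dropLast ++ [fz, fy] := by
        nth_rewrite 1 [hS]; simp
      have hnm : ¬ mrg fz fy fx := fun hm => by
        have : fz.2 = fx.2 := hm.2.2.2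
        simp [fz, fx] at this
        exact hxz this.symm
      calc goA (FreeGroup.invRev rest ++ [fz] ++ [fy] ++ [fx])
          = snocA (goA (FreeGroup.invRev rest ++ [fz] ++ [fy])) fx := goA_snoc _ fx
        _ = snocA (S ++ [fy]) fx := by rw [step1]
        _ = snocA (S.dropLast ++ [fz, fy]) fx := by rw [hSfy]
        _ = S.dropLast ++ [fz, fy, fx] := by rw [snocA_eq, if_neg hnm]
        _ = (S ++ [fy]) ++ [fx] := by rw [hSfy]; simp
        _ = goA (FreeGroup.invRev rest ++ [fz] ++ [fy]) ++ [fx] := by rw [step1]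
    · have hx1 : fx.1 = 1 := fin2_ne0 hx
      exact goA_snoc_one _ _ hx1
  | case3 l h =>
    intro h'
    rw [goA_short l (len_le_two_of_no3 h),
      goA_short _ (by rw [FreeGroup.invRev_length]; exact len_le_two_of_no3 h)]

lemma goA_split : ∀ (l : List Ltr), ∀ (l' : List Ltr) (c : Ltr), l.getLast? = some c →
    c.1 = 0 → AltL (l ++ l') → goA (l ++ l') = goA l ++ (goA (c :: l')).tail := by
  intro l
  induction l using goA.induct with
  | case1 x y z rest h ih =>
    intro l' c hlast hc halt
    have hxz : x = z := mrg_eq h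
    rcases rest with _ | ⟨r0, r'⟩
    · have hcz : c = z := by simp at hlast; exact hlast.symm
      have : ([x, y, z] : List Ltr) ++ l' = x :: y :: z :: l' := by simp
      rw [this, goA_pos l' h, goA_pos ([] : List Ltr) h, goA_one]
      obtain ⟨u, hu⟩ := goA_head (c :: l') c l' rfl
      rw [hcz, ← hxz] at hu ⊢
      rw [hu]
      simp
    · have hlast' : (x :: r0 :: r').getLast? = some c := by
        simp only [List.getLast?_cons_cons] at hlast ⊢
        exact hlast
      have heq : (x :: y :: z :: r0 :: r') ++ l' = x :: y :: z :: ((r0 :: r') ++ l') := by simp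
      rw [heq, goA_pos _ h, goA_pos _ h]
      have halt2 : AltL ((x :: r0 :: r') ++ l') := by
        have : AltL (x :: y :: z :: ((r0 :: r') ++ l')) := by rw [← heq]; exact halt
        exact alt_drop2 this (h.1.trans h.2.2.1.symm)
      have := ih l' c hlast' hc halt2
      simpa using this
  | case2 x y z rest h ih =>
    intro l' c hlast hc halt
    have heq : (x :: y :: z :: rest) ++ l' = x :: ((y :: z :: rest) ++ l') := by simp
    rw [heq, show x :: ((y :: z :: rest) ++ l') = x :: y :: z :: (rest ++ l') by simp,
      goA_neg _ h, goA_neg rest h,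
      show y :: z :: (rest ++ l') = (y :: z :: rest) ++ l' by simp,
      ih l' c (by simpa [List.getLast?_cons_cons] using hlast) hc
        (by rw [← show y :: z :: (rest ++ l') = (y :: z :: rest) ++ l' by simp]
            exact alt_tail (by simpa using halt))]
    simp
  | case3 l h =>
    intro l' c hlast hc halt
    rcases l with _ | ⟨a, _ | ⟨b, _ | ⟨d, r⟩⟩⟩
    · simp at hlast
    · have hac : a = c := by simpa using hlast
      subst hac
      obtain ⟨u, hu⟩ := goA_head (a :: l') a l' rfl
      rw [show [a] ++ l' = a :: l' by simp, hu, goA_one]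
      simp
    · have hbc : b = c := by simpa using hlast
      subst hbc
      rcases l' with _ | ⟨u, l''⟩
      · simp [goA_two, goA_one]
      · have hab : a.1 ≠ b.1 := alt_head (by simpa using halt)
        have ha1 : a.1 = 1 := fin2_ne0 (fun e => hab (e.trans hc.symm))
        have hnm : ¬ mrg a b u := fun hm => by rw [hm.1] at ha1; exact absurd ha1 (by decide)
        rw [show [a, b] ++ u :: l'' = a :: b :: u :: l'' by simp, goA_neg _ hnm, goA_two]
        obtain ⟨v, hv⟩ := goA_head (b :: u :: l'') b (u :: l'') rfl
        rw [hv]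
        simp
    · exact (h a b d r rfl).elim

def sw (p : Ltr) : Ltr := (if p.1 = 0 then 1 else 0, p.2)

def mrgB (x y z : Ltr) : Prop := x.1 = 1 ∧ y.1 = 0 ∧ z.1 = 1 ∧ x.2 = z.2

lemma sw_sw (p : Ltr) : sw (sw p) = p := by
  rcases p with ⟨i, b⟩; fin_cases i <;> simp [sw]

lemma map_sw_sw (l : List Ltr) : (l.map sw).map sw = l := by
  rw [List.map_map]
  have : (sw ∘ sw) = id := funext sw_sw
  rw [this, List.map_id]

lemma sw_fst_eq (p q : Ltr) : (sw p).1 = (sw q).1 ↔ p.1 = q.1 := by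
  rcases p with ⟨i, b⟩; rcases q with ⟨j, c⟩
  fin_cases i <;> fin_cases j <;> simp [sw]

lemma sw_snd (p : Ltr) : (sw p).2 = p.2 := rfl

lemma mrgB_sw {x y z : Ltr} : mrgB (sw x) (sw y) (sw z) ↔ mrg x y z := by
  unfold mrgB mrg
  rcases x with ⟨i, b⟩; rcases y with ⟨j, c⟩; rcases z with ⟨k, d⟩
  fin_cases i <;> fin_cases j <;> fin_cases k <;> simp [sw]

lemma goB_nil : goB [] = [] := by rw [goB]; simp
lemma goB_one (x : Ltr) : goB [x] = [x] := by rw [goB]; simp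
lemma goB_two (x y : Ltr) : goB [x,y] = [x,y] := by rw [goB]; simp

lemma goB_pos {x y z : Ltr} (r : List Ltr) (h : mrgB x y z) :
    goB (x::y::z::r) = goB (x :: r) := by rw [goB]; exact if_pos h

lemma goB_neg {x y z : Ltr} (r : List Ltr) (h : ¬ mrgB x y z) :
    goB (x::y::z::r) = x :: goB (y :: z :: r) := by rw [goB]; exact if_neg h

lemma goB_short (l : List Ltr) (h : l.length ≤ 2) : goB l = l := by
  match l, h with
  | [], _ => exact goB_nil
  | [x], _ => exact goB_one x
  | [x,y], _ => exact goB_two x y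

lemma goB_map : ∀ l : List Ltr, goB (l.map sw) = (goA l).map sw := by
  intro l
  induction l using goA.induct with
  | case1 x y z rest h ih =>
    rw [show (x :: y :: z :: rest).map sw = sw x :: sw y :: sw z :: rest.map sw by simp,
      goB_pos _ (mrgB_sw.mpr h), goA_pos rest h,
      show sw x :: rest.map sw = (x :: rest).map sw by simp, ih]
  | case2 x y z rest h ih =>
    rw [show (x :: y :: z :: rest).map sw = sw x :: sw y :: sw z :: rest.map sw by simp,
      goB_neg _ (fun hm => h (mrgB_sw.mp hm)), goA_neg rest h,
      show sw y :: sw z :: rest.map sw = (y :: z :: rest).map sw by simp, ih]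
    simp
  | case3 l h =>
    rw [goA_short l (len_le_two_of_no3 h),
      goB_short _ (by rw [List.length_map]; exact len_le_two_of_no3 h)]

lemma goB_eq (l : List Ltr) : goB l = (goA (l.map sw)).map sw := by
  have := goB_map (l.map sw)
  rw [map_sw_sw] at this
  rw [this]

lemma alt_map_sw {l : List Ltr} : AltL (l.map sw) ↔ AltL l := by
  unfold AltL List.Chain'
  rw [List.isChain_map]
  constructor
  · exact fun h => h.imp (fun a b hab => fun e => hab ((sw_fst_eq a b).mpr e))
  · exact fun h => h.imp (fun a b hab => fun e => hab ((sw_fst_eq a b).mp e))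

lemma invRev_map_sw (l : List Ltr) :
    FreeGroup.invRev (l.map sw) = (FreeGroup.invRev l).map sw := by
  simp only [FreeGroup.invRev, List.map_map, List.map_reverse]
  rfl

lemma goB_head (x : Ltr) (t : List Ltr) : ∃ u, goB (x :: t) = x :: u := by
  rw [goB_eq]
  obtain ⟨u, hu⟩ := goA_head ((x :: t).map sw) (sw x) (t.map sw) (by simp)
  rw [hu]
  exact ⟨u.map sw, by simp [sw_sw]⟩

lemma goB_alt {l : List Ltr} (h : AltL l) : AltL (goB l) := by
  rw [goB_eq]
  exact alt_map_sw.mpr (goA_alt _ (alt_map_sw.mpr h))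

lemma goB_goB (l : List Ltr) : goB (goB l) = goB l := by
  rw [goB_eq l, goB_eq ((goA (l.map sw)).map sw), map_sw_sw, goA_goA]

lemma goB_len (l : List Ltr) : (goB l).length ≤ l.length := by
  rw [goB_eq]
  calc ((goA (l.map sw)).map sw).length = (goA (l.map sw)).length := by simp
    _ ≤ (l.map sw).length := goA_len _
    _ = l.length := by simp

lemma goB_len_eq (l : List Ltr) (h : (goB l).length = l.length) : goB l = l := by
  rw [goB_eq] at h ⊢
  have : (goA (l.map sw)).length = (l.map sw).length := by
    simpa using h
  rw [goA_len_eq _ this, map_sw_sw]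

lemma goB_invRev (l : List Ltr) (h : AltL l) :
    goB (FreeGroup.invRev l) = FreeGroup.invRev (goB l) := by
  rw [goB_eq (FreeGroup.invRev l), ← invRev_map_sw l, goA_invRev _ (alt_map_sw.mpr h),
    goB_eq l, invRev_map_sw]

lemma goB_split (l l' : List Ltr) (c : Ltr) (hlast : l.getLast? = some c)
    (hc : c.1 = 1) (halt : AltL (l ++ l')) :
    goB (l ++ l') = goB l ++ (goB (c :: l')).tail := by
  rw [goB_eq (l ++ l'), show (l ++ l').map sw = l.map sw ++ l'.map sw by simp]
  have hlast' : (l.map sw).getLast? = some (sw c) := by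
    rw [List.getLast?_map, hlast]; rfl
  have hc' : (sw c).1 = 0 := by
    rcases c with ⟨i, b⟩; fin_cases i <;> simp_all [sw]
  have halt' : AltL (l.map sw ++ l'.map sw) := by
    rw [show l.map sw ++ l'.map sw = (l ++ l').map sw by simp]
    exact alt_map_sw.mpr halt
  rw [goA_split (l.map sw) (l'.map sw) (sw c) hlast' hc' halt']
  rw [show sw c :: l'.map sw = ((c :: l').map sw) by simp]
  rw [goB_eq l, goB_eq (c :: l')]
  have htl : ∀ (f : Ltr → Ltr) (m : List Ltr), (m.map f).tail = m.tail.map f := by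
    intro f m; cases m <;> simp
  simp [← htl]

lemma reduce_alt : ∀ l : List Ltr, AltL l → FreeGroup.reduce l = l := by
  intro l
  induction l with
  | nil => intro _; rfl
  | cons x t ih =>
    intro h
    rw [FreeGroup.reduce.cons, ih (alt_tail h)]
    cases t with
    | nil => rfl
    | cons y u =>
      show (if x.1 = y.1 ∧ x.2 = !y.2 then u else x :: y :: u) = x :: y :: u
      exact if_neg (fun hc => alt_head h hc.1)

lemma toWord_mk_alt {l : List Ltr} (h : AltL l) : (FreeGroup.mk l).toWord = l := by
  rw [FreeGroup.toWord_mk]; exact reduce_alt l h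



lemma psiF_mk (l : List Ltr) : psiF (FreeGroup.mk l) = FreeGroup.mk (l.map sw) := by
  unfold psiF
  rw [FreeGroup.map.mk]
  rfl



lemma alphaF_toWord {w : W} (hw : AltL w.toWord) : (alphaF w).toWord = goA w.toWord :=
  toWord_mk_alt (goA_alt _ hw)

lemma betaF_toWord {w : W} (hw : AltL w.toWord) : (betaF w).toWord = goB w.toWord :=
  toWord_mk_alt (goB_alt hw)

theorem alphaF_betaF_properties' :
    (∀ w ∈ Alt, alphaF w⁻¹ = (alphaF w)⁻¹ ∧ betaF w⁻¹ = (betaF w)⁻¹) ∧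
    (∀ w ∈ Alt, psiF (alphaF w) = betaF (psiF w) ∧ psiF (betaF w) = alphaF (psiF w)) ∧
    (∀ w ∈ Alt,
      alphaF (alphaF w) = alphaF w ∧
      (alphaF w).toWord.length ≤ w.toWord.length ∧
      ((alphaF w).toWord.length = w.toWord.length ↔ alphaF w = w) ∧
      betaF (betaF w) = betaF w ∧
      (betaF w).toWord.length ≤ w.toWord.length ∧
      ((betaF w).toWord.length = w.toWord.length ↔ betaF w = w)) ∧
    (∀ (v₁ v₂ : W) (s : Bool),
      (List.Chain' (fun p q : Fin 2 × Bool => p.1 ≠ q.1)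
          (v₁.toWord ++ [((0 : Fin 2), s)] ++ v₂.toWord) →
        alphaF (v₁ * letter 0 s * v₂) =
          alphaF (v₁ * letter 0 s) * (letter 0 s)⁻¹ * alphaF (letter 0 s * v₂)) ∧
      (List.Chain' (fun p q : Fin 2 × Bool => p.1 ≠ q.1)
          (v₁.toWord ++ [((1 : Fin 2), s)] ++ v₂.toWord) →
        betaF (v₁ * letter 1 s * v₂) =
          betaF (v₁ * letter 1 s) * (letter 1 s)⁻¹ * betaF (letter 1 s * v₂))) := by
  refine ⟨?_, ?_, ?_, ?_⟩
  · -- inversion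
    intro w hw
    have hw' : AltL w.toWord := hw
    constructor
    · show FreeGroup.mk (goA (w⁻¹).toWord) = (FreeGroup.mk (goA w.toWord))⁻¹
      rw [FreeGroup.toWord_inv, goA_invRev _ hw', ← FreeGroup.inv_mk]
    · show FreeGroup.mk (goB (w⁻¹).toWord) = (FreeGroup.mk (goB w.toWord))⁻¹
      rw [FreeGroup.toWord_inv, goB_invRev _ hw', ← FreeGroup.inv_mk]
  · -- psi
    intro w hw
    have hw' : AltL w.toWord := hw
    have hpsi : psiF w = FreeGroup.mk (w.toWord.map sw) := by
      conv_lhs => rw [← FreeGroup.mk_toWord (x := w)]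
      exact psiF_mk _
    have hpsitw : (psiF w).toWord = w.toWord.map sw := by
      rw [hpsi]; exact toWord_mk_alt (alt_map_sw.mpr hw')
    constructor
    · show psiF (FreeGroup.mk (goA w.toWord)) = FreeGroup.mk (goB (psiF w).toWord)
      rw [psiF_mk, hpsitw, goB_map]
    · show psiF (FreeGroup.mk (goB w.toWord)) = FreeGroup.mk (goA (psiF w).toWord)
      rw [psiF_mk, hpsitw, goB_eq, map_sw_sw]
  · -- idempotence and length
    intro w hw
    have hw' : AltL w.toWord := hw
    have hA := alphaF_toWord hw'
    have hB := betaF_toWord hw'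
    refine ⟨?_, ?_, ?_, ?_, ?_, ?_⟩
    · show FreeGroup.mk (goA (alphaF w).toWord) = alphaF w
      rw [hA, goA_goA]; rfl
    · rw [hA]; exact goA_len _
    · constructor
      · intro hlen
        rw [hA] at hlen
        show FreeGroup.mk (goA w.toWord) = w
        rw [goA_len_eq _ hlen, FreeGroup.mk_toWord]
      · intro he; rw [he]
    · show FreeGroup.mk (goB (betaF w).toWord) = betaF w
      rw [hB, goB_goB]; rfl
    · rw [hB]; exact goB_len _
    · constructor
      · intro hlen
        rw [hB] at hlen
        show FreeGroup.mk (goB w.toWord) = w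
        rw [goB_len_eq _ hlen, FreeGroup.mk_toWord]
      · intro he; rw [he]
  · -- product formula
    intro v₁ v₂ s
    constructor
    · intro hch
      set L₁ := v₁.toWord with hL₁
      set L₂ := v₂.toWord with hL₂
      set c : Ltr := ((0 : Fin 2), s) with hc
      have halt : AltL (L₁ ++ [c] ++ L₂) := hch
      have alt1 : AltL (L₁ ++ [c]) := (List.isChain_append.mp halt).1
      have halt' : AltL (L₁ ++ (c :: L₂)) := by
        rwa [List.append_assoc] at halt
      have alt2 : AltL (c :: L₂) := (List.isChain_append.mp halt').2.1
      have e1 : v₁ * letter 0 s * v₂ = FreeGroup.mk (L₁ ++ [c] ++ L₂) := by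
        conv_lhs => rw [← FreeGroup.mk_toWord (x := v₁), ← FreeGroup.mk_toWord (x := v₂)]
        rw [show letter 0 s = FreeGroup.mk [c] from rfl, FreeGroup.mul_mk, FreeGroup.mul_mk]
      have e2 : v₁ * letter 0 s = FreeGroup.mk (L₁ ++ [c]) := by
        conv_lhs => rw [← FreeGroup.mk_toWord (x := v₁)]
        rw [show letter 0 s = FreeGroup.mk [c] from rfl, FreeGroup.mul_mk]
      have e3 : letter 0 s * v₂ = FreeGroup.mk (c :: L₂) := by
        conv_lhs => rw [← FreeGroup.mk_toWord (x := v₂)]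
        rw [show letter 0 s = FreeGroup.mk [c] from rfl, FreeGroup.mul_mk]
        rfl
      obtain ⟨T, hT⟩ := goA_head (c :: L₂) c L₂ rfl
      have hsplit : goA (L₁ ++ [c] ++ L₂) = goA (L₁ ++ [c]) ++ T := by
        rw [goA_split (L₁ ++ [c]) L₂ c (by simp) rfl halt, hT]; rfl
      show FreeGroup.mk (goA (v₁ * letter 0 s * v₂).toWord) =
        FreeGroup.mk (goA (v₁ * letter 0 s).toWord) * (letter 0 s)⁻¹ *
          FreeGroup.mk (goA (letter 0 s * v₂).toWord)
      rw [e1, e2, e3, toWord_mk_alt halt, toWord_mk_alt alt1, toWord_mk_alt alt2,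
        hsplit, hT, show letter 0 s = FreeGroup.mk [c] from rfl,
        show (c :: T) = [c] ++ T from rfl, ← FreeGroup.mul_mk, ← FreeGroup.mul_mk]
      group
    · intro hch
      set L₁ := v₁.toWord with hL₁
      set L₂ := v₂.toWord with hL₂
      set c : Ltr := ((1 : Fin 2), s) with hc
      have halt : AltL (L₁ ++ [c] ++ L₂) := hch
      have alt1 : AltL (L₁ ++ [c]) := (List.isChain_append.mp halt).1
      have halt' : AltL (L₁ ++ (c :: L₂)) := by
        rwa [List.append_assoc] at halt
      have alt2 : AltL (c :: L₂) := (List.isChain_append.mp halt').2.1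
      have e1 : v₁ * letter 1 s * v₂ = FreeGroup.mk (L₁ ++ [c] ++ L₂) := by
        conv_lhs => rw [← FreeGroup.mk_toWord (x := v₁), ← FreeGroup.mk_toWord (x := v₂)]
        rw [show letter 1 s = FreeGroup.mk [c] from rfl, FreeGroup.mul_mk, FreeGroup.mul_mk]
      have e2 : v₁ * letter 1 s = FreeGroup.mk (L₁ ++ [c]) := by
        conv_lhs => rw [← FreeGroup.mk_toWord (x := v₁)]
        rw [show letter 1 s = FreeGroup.mk [c] from rfl, FreeGroup.mul_mk]
      have e3 : letter 1 s * v₂ = FreeGroup.mk (c :: L₂) := by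
        conv_lhs => rw [← FreeGroup.mk_toWord (x := v₂)]
        rw [show letter 1 s = FreeGroup.mk [c] from rfl, FreeGroup.mul_mk]
        rfl
      obtain ⟨T, hT⟩ := goB_head c L₂
      have hsplit : goB (L₁ ++ [c] ++ L₂) = goB (L₁ ++ [c]) ++ T := by
        rw [goB_split (L₁ ++ [c]) L₂ c (by simp) rfl halt, hT]; rfl
      show FreeGroup.mk (goB (v₁ * letter 1 s * v₂).toWord) =
        FreeGroup.mk (goB (v₁ * letter 1 s).toWord) * (letter 1 s)⁻¹ *
          FreeGroup.mk (goB (letter 1 s * v₂).toWord)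
      rw [e1, e2, e3, toWord_mk_alt halt, toWord_mk_alt alt1, toWord_mk_alt alt2,
        hsplit, hT, show letter 1 s = FreeGroup.mk [c] from rfl,
        show (c :: T) = [c] ++ T from rfl, ← FreeGroup.mul_mk, ← FreeGroup.mul_mk]
      group

theorem alphaF_betaF_properties :
    (∀ w ∈ Alt, alphaF w⁻¹ = (alphaF w)⁻¹ ∧ betaF w⁻¹ = (betaF w)⁻¹) ∧
    (∀ w ∈ Alt, psiF (alphaF w) = betaF (psiF w) ∧ psiF (betaF w) = alphaF (psiF w)) ∧
    (∀ w ∈ Alt,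
      alphaF (alphaF w) = alphaF w ∧
      (alphaF w).toWord.length ≤ w.toWord.length ∧
      ((alphaF w).toWord.length = w.toWord.length ↔ alphaF w = w) ∧
      betaF (betaF w) = betaF w ∧
      (betaF w).toWord.length ≤ w.toWord.length ∧
      ((betaF w).toWord.length = w.toWord.length ↔ betaF w = w)) ∧
    (∀ (v₁ v₂ : W) (s : Bool),
      (List.Chain' (fun p q : Fin 2 × Bool => p.1 ≠ q.1)
          (v₁.toWord ++ [((0 : Fin 2), s)] ++ v₂.toWord) →
        alphaF (v₁ * letter 0 s * v₂) =
          alphaF (v₁ * letter 0 s) * (letter 0 s)⁻¹ * alphaF (letter 0 s * v₂)) ∧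
      (List.Chain' (fun p q : Fin 2 × Bool => p.1 ≠ q.1)
          (v₁.toWord ++ [((1 : Fin 2), s)] ++ v₂.toWord) →
        betaF (v₁ * letter 1 s * v₂) =
          betaF (v₁ * letter 1 s) * (letter 1 s)⁻¹ * betaF (letter 1 s * v₂))) :=
  alphaF_betaF_properties'
end

section
/- If (x₁,x₂,x₃) ∼ (y₁,y₂,y₃) are equivalent triples of elements of F₂ and x₁, x₂, x₃ ∈ 𝒜, then y₁, y₂, y₃ ∈ 𝒜; moreover in this case (α(x₁),α(x₂),α(x₃)) ∼ (α(y₁),α(y₂),α(y₃)) and (β(x₁),β(x₂),β(x₃)) ∼ (β(y₁),β(y₂),β(y₃)). -/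
open FreeGroup

/-- The automorphism `φ_a : a ↦ a⁻¹, b ↦ b` of `F₂`. -/
def phiaF : W →* W :=
  FreeGroup.lift (fun i : Fin 2 => if i = 0 then (FreeGroup.of (0 : Fin 2))⁻¹ else FreeGroup.of 1)

/-- The automorphism `φ_b : a ↦ a, b ↦ b⁻¹` of `F₂`. -/
def phibF : W →* W :=
  FreeGroup.lift (fun i : Fin 2 => if i = 0 then FreeGroup.of 0 else (FreeGroup.of (1 : Fin 2))⁻¹)

/-- Generating moves for the equivalence relation `∼` on triples:
rotation, inversion, and the sign-change automorphisms `φ_a`, `φ_b`. -/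
def TripleBase : W × W × W → W × W × W → Prop := fun t t' =>
  t' = (t.2.1, t.2.2, t.1) ∨
  t' = ((t.2.2)⁻¹, (t.2.1)⁻¹, (t.1)⁻¹) ∨
  t' = (phiaF t.1, phiaF t.2.1, phiaF t.2.2) ∨
  t' = (phibF t.1, phibF t.2.1, phibF t.2.2)

/-- The equivalence relation `∼` on triples of elements of `F₂`. -/
def TripleEquiv : W × W × W → W × W × W → Prop := Relation.EqvGen TripleBase


abbrev L2 := List (Fin 2 × Bool)


lemma goA_one_s9 (p : Fin 2 × Bool) : goA [p] = [p] := by simp [goA]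
lemma goA_two_s9 (p q : Fin 2 × Bool) : goA [p,q] = [p,q] := by simp [goA]
lemma goA_cons3 (x y z : Fin 2 × Bool) (rest : L2) :
    goA (x :: y :: z :: rest) =
      if x.1 = 0 ∧ y.1 = 1 ∧ z.1 = 0 ∧ x.2 = z.2 then goA (x :: rest)
      else x :: goA (y :: z :: rest) := by
  rw [goA]

theorem lemA : ∀ (N : L2) (x y : Fin 2 × Bool), x.1 = 0 → y.1 = 1 →
    goA (N ++ [x, y, x]) = goA (N ++ [x])
  | [], x, y, hx, hy => by simp [goA_cons3, hx, hy, goA_one_s9]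
  | [p], x, y, hx, hy => by
      have : ¬ (p.1 = 0 ∧ x.1 = 1 ∧ y.1 = 0 ∧ p.2 = y.2) := by
        simp [hx]
      simp [goA_cons3, this, hx, hy, goA_one_s9, goA_two_s9]
  | [p,q], x, y, hx, hy => by
      by_cases c1 : p.1 = 0 ∧ q.1 = 1 ∧ x.1 = 0 ∧ p.2 = x.2
      · simp only [List.cons_append, List.nil_append, goA_cons3, if_pos c1]
        have c2 : p.1 = 0 ∧ y.1 = 1 ∧ x.1 = 0 ∧ p.2 = x.2 := ⟨c1.1, hy, hx, c1.2.2.2⟩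
        rw [if_pos c2]
      · simp only [List.cons_append, List.nil_append, goA_cons3, if_neg c1]
        have : ¬ (q.1 = 1 ∧ x.1 = 1) := by simp [hx]
        have c2 : ¬ (q.1 = 0 ∧ x.1 = 1 ∧ y.1 = 0 ∧ q.2 = y.2) := by simp [hx]
        rw [if_neg c2]
        simp [goA_cons3, hx, hy, goA_one_s9, goA_two_s9]
  | (p :: q :: r :: t), x, y, hx, hy => by
      by_cases c1 : p.1 = 0 ∧ q.1 = 1 ∧ r.1 = 0 ∧ p.2 = r.2
      · have h1 : goA ((p::q::r::t) ++ [x,y,x]) = goA ((p::t) ++ [x,y,x]) := by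
          rw [List.cons_append, List.cons_append, List.cons_append, goA_cons3, if_pos c1]
          try rfl
        have h2 : goA ((p::q::r::t) ++ [x]) = goA ((p::t) ++ [x]) := by
          rw [List.cons_append, List.cons_append, List.cons_append, goA_cons3, if_pos c1]
          try rfl
        rw [h1, h2, lemA (p::t) x y hx hy]
      · have h1 : goA ((p::q::r::t) ++ [x,y,x]) = p :: goA ((q::r::t) ++ [x,y,x]) := by
          rw [List.cons_append, List.cons_append, List.cons_append, goA_cons3, if_neg c1]
          try rfl
        have h2 : goA ((p::q::r::t) ++ [x]) = p :: goA ((q::r::t) ++ [x]) := by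
          rw [List.cons_append, List.cons_append, List.cons_append, goA_cons3, if_neg c1]
          try rfl
        rw [h1, h2, lemA (q::r::t) x y hx hy]
termination_by N => N.length

theorem lemC : ∀ (N : L2) (z y x : Fin 2 × Bool),
    ¬ (z.1 = 0 ∧ y.1 = 1 ∧ x.1 = 0 ∧ z.2 = x.2) →
    goA (N ++ [z, y, x]) = goA (N ++ [z, y]) ++ [x]
  | [], z, y, x, hc => by
      simp only [List.nil_append, goA_cons3, if_neg hc, goA_two_s9]
      rfl
  | [p], z, y, x, hc => by
      by_cases c1 : p.1 = 0 ∧ z.1 = 1 ∧ y.1 = 0 ∧ p.2 = y.2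
      · simp only [List.cons_append, List.nil_append, goA_cons3, if_pos c1, goA_one_s9, goA_two_s9]
      · simp only [List.cons_append, List.nil_append, goA_cons3, if_neg c1, if_neg hc, goA_two_s9]
  | [p,q], z, y, x, hc => by
      by_cases c1 : p.1 = 0 ∧ q.1 = 1 ∧ z.1 = 0 ∧ p.2 = z.2
      · have c2 : ¬ (p.1 = 0 ∧ y.1 = 1 ∧ x.1 = 0 ∧ p.2 = x.2) := by
          rintro ⟨h1, h2, h3, h4⟩
          exact hc ⟨c1.2.2.1, h2, h3, by rw [← c1.2.2.2]; exact h4⟩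
        simp only [List.cons_append, List.nil_append, goA_cons3, if_pos c1, if_neg c2, goA_one_s9,
          goA_two_s9]
      · by_cases c2 : q.1 = 0 ∧ z.1 = 1 ∧ y.1 = 0 ∧ q.2 = y.2
        · simp [goA_cons3, goA_one_s9, goA_two_s9, c1, hc, c2]
        · simp [goA_cons3, goA_one_s9, goA_two_s9, c1, hc, c2]
  | (p :: q :: r :: t), z, y, x, hc => by
      by_cases c1 : p.1 = 0 ∧ q.1 = 1 ∧ r.1 = 0 ∧ p.2 = r.2
      · have h1 : goA ((p::q::r::t) ++ [z,y,x]) = goA ((p::t) ++ [z,y,x]) := by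
          rw [List.cons_append, List.cons_append, List.cons_append, goA_cons3, if_pos c1]
          try rfl
        have h2 : goA ((p::q::r::t) ++ [z,y]) = goA ((p::t) ++ [z,y]) := by
          rw [List.cons_append, List.cons_append, List.cons_append, goA_cons3, if_pos c1]
          try rfl
        rw [h1, h2, lemC (p::t) z y x hc]
      · have h1 : goA ((p::q::r::t) ++ [z,y,x]) = p :: goA ((q::r::t) ++ [z,y,x]) := by
          rw [List.cons_append, List.cons_append, List.cons_append, goA_cons3, if_neg c1]
          try rfl
        have h2 : goA ((p::q::r::t) ++ [z,y]) = p :: goA ((q::r::t) ++ [z,y]) := by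
          rw [List.cons_append, List.cons_append, List.cons_append, goA_cons3, if_neg c1]
          try rfl
        rw [h1, h2, lemC (q::r::t) z y x hc]
        rfl
termination_by N => N.length

theorem goA_reverse : ∀ l : L2, goA l.reverse = (goA l).reverse
  | [] => by simp [goA_nil]
  | [p] => by simp [goA_one_s9]
  | [p, q] => by simp [goA_two_s9]
  | (x :: y :: z :: rest) => by
      by_cases c : x.1 = 0 ∧ y.1 = 1 ∧ z.1 = 0 ∧ x.2 = z.2
      · have hzx : z = x := Prod.ext (by rw [c.2.2.1, c.1]) (c.2.2.2.symm)
        have h1 : (x :: y :: z :: rest).reverse = rest.reverse ++ [x, y, x] := by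
          subst hzx; simp
        rw [h1, lemA rest.reverse x y c.1 c.2.1, goA_cons3, if_pos c]
        have : rest.reverse ++ [x] = (x :: rest).reverse := by simp
        rw [this, goA_reverse (x :: rest)]
      · have hc' : ¬ (z.1 = 0 ∧ y.1 = 1 ∧ x.1 = 0 ∧ z.2 = x.2) := by
          rintro ⟨h1, h2, h3, h4⟩; exact c ⟨h3, h2, h1, h4.symm⟩
        have h1 : (x :: y :: z :: rest).reverse = rest.reverse ++ [z, y, x] := by simp
        rw [h1, lemC rest.reverse z y x hc',
          show rest.reverse ++ [z, y] = (y :: z :: rest).reverse by simp,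
          goA_reverse (y :: z :: rest), goA_cons3, if_neg c]
        simp
termination_by l => l.length

theorem goA_map (f : Fin 2 → Bool → Bool) (hf : ∀ i a b, f i a = f i b → a = b) :
    ∀ l : L2, goA (l.map fun p => (p.1, f p.1 p.2)) = (goA l).map fun p => (p.1, f p.1 p.2)
  | [] => by simp [goA_nil]
  | [p] => by simp [goA_one_s9]
  | [p, q] => by simp [goA_two_s9]
  | (x :: y :: z :: rest) => by
      have hcond : ((x.1, f x.1 x.2).1 = 0 ∧ (y.1, f y.1 y.2).1 = 1 ∧ (z.1, f z.1 z.2).1 = 0 ∧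
          (x.1, f x.1 x.2).2 = (z.1, f z.1 z.2).2) ↔
          (x.1 = 0 ∧ y.1 = 1 ∧ z.1 = 0 ∧ x.2 = z.2) := by
        constructor
        · rintro ⟨h1, h2, h3, h4⟩
          refine ⟨h1, h2, h3, hf 0 _ _ ?_⟩
          rw [← h1, ← h3] at *
          simpa [h1, ← h3] using h4
        · rintro ⟨h1, h2, h3, h4⟩
          exact ⟨h1, h2, h3, by rw [h1, h3, h4]⟩
      by_cases c : x.1 = 0 ∧ y.1 = 1 ∧ z.1 = 0 ∧ x.2 = z.2
      · rw [List.map_cons, List.map_cons, List.map_cons, goA_cons3, if_pos (hcond.mpr c),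
          goA_cons3, if_pos c]
        exact goA_map f hf (x :: rest)
      · rw [List.map_cons, List.map_cons, List.map_cons, goA_cons3, if_neg (hcond.not.mpr c),
          goA_cons3, if_neg c, List.map_cons]
        exact congrArg _ (goA_map f hf (y :: z :: rest))
termination_by l => l.length




lemma goB_one_s9 (p : Fin 2 × Bool) : goB [p] = [p] := by simp [goB]
lemma goB_two_s9 (p q : Fin 2 × Bool) : goB [p,q] = [p,q] := by simp [goB]
lemma goB_cons3 (x y z : Fin 2 × Bool) (rest : L2) :
    goB (x :: y :: z :: rest) =
      if x.1 = 1 ∧ y.1 = 0 ∧ z.1 = 1 ∧ x.2 = z.2 then goB (x :: rest)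
      else x :: goB (y :: z :: rest) := by
  rw [goB]

theorem lemAB : ∀ (N : L2) (x y : Fin 2 × Bool), x.1 = 1 → y.1 = 0 →
    goB (N ++ [x, y, x]) = goB (N ++ [x])
  | [], x, y, hx, hy => by simp [goB_cons3, hx, hy, goB_one_s9]
  | [p], x, y, hx, hy => by
      have : ¬ (p.1 = 1 ∧ x.1 = 0 ∧ y.1 = 1 ∧ p.2 = y.2) := by
        simp [hx]
      simp [goB_cons3, this, hx, hy, goB_one_s9, goB_two_s9]
  | [p,q], x, y, hx, hy => by
      by_cases c1 : p.1 = 1 ∧ q.1 = 0 ∧ x.1 = 1 ∧ p.2 = x.2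
      · simp only [List.cons_append, List.nil_append, goB_cons3, if_pos c1]
        have c2 : p.1 = 1 ∧ y.1 = 0 ∧ x.1 = 1 ∧ p.2 = x.2 := ⟨c1.1, hy, hx, c1.2.2.2⟩
        rw [if_pos c2]
      · simp only [List.cons_append, List.nil_append, goB_cons3, if_neg c1]
        have : ¬ (q.1 = 0 ∧ x.1 = 0) := by simp [hx]
        have c2 : ¬ (q.1 = 1 ∧ x.1 = 0 ∧ y.1 = 1 ∧ q.2 = y.2) := by simp [hx]
        rw [if_neg c2]
        simp [goB_cons3, hx, hy, goB_one_s9, goB_two_s9]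
  | (p :: q :: r :: t), x, y, hx, hy => by
      by_cases c1 : p.1 = 1 ∧ q.1 = 0 ∧ r.1 = 1 ∧ p.2 = r.2
      · have h1 : goB ((p::q::r::t) ++ [x,y,x]) = goB ((p::t) ++ [x,y,x]) := by
          rw [List.cons_append, List.cons_append, List.cons_append, goB_cons3, if_pos c1]
          try rfl
        have h2 : goB ((p::q::r::t) ++ [x]) = goB ((p::t) ++ [x]) := by
          rw [List.cons_append, List.cons_append, List.cons_append, goB_cons3, if_pos c1]
          try rfl
        rw [h1, h2, lemAB (p::t) x y hx hy]
      · have h1 : goB ((p::q::r::t) ++ [x,y,x]) = p :: goB ((q::r::t) ++ [x,y,x]) := by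
          rw [List.cons_append, List.cons_append, List.cons_append, goB_cons3, if_neg c1]
          try rfl
        have h2 : goB ((p::q::r::t) ++ [x]) = p :: goB ((q::r::t) ++ [x]) := by
          rw [List.cons_append, List.cons_append, List.cons_append, goB_cons3, if_neg c1]
          try rfl
        rw [h1, h2, lemAB (q::r::t) x y hx hy]
termination_by N => N.length

theorem lemCB : ∀ (N : L2) (z y x : Fin 2 × Bool),
    ¬ (z.1 = 1 ∧ y.1 = 0 ∧ x.1 = 1 ∧ z.2 = x.2) →
    goB (N ++ [z, y, x]) = goB (N ++ [z, y]) ++ [x]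
  | [], z, y, x, hc => by
      simp only [List.nil_append, goB_cons3, if_neg hc, goB_two_s9]
      rfl
  | [p], z, y, x, hc => by
      by_cases c1 : p.1 = 1 ∧ z.1 = 0 ∧ y.1 = 1 ∧ p.2 = y.2
      · simp only [List.cons_append, List.nil_append, goB_cons3, if_pos c1, goB_one_s9, goB_two_s9]
      · simp only [List.cons_append, List.nil_append, goB_cons3, if_neg c1, if_neg hc, goB_two_s9]
  | [p,q], z, y, x, hc => by
      by_cases c1 : p.1 = 1 ∧ q.1 = 0 ∧ z.1 = 1 ∧ p.2 = z.2
      · have c2 : ¬ (p.1 = 1 ∧ y.1 = 0 ∧ x.1 = 1 ∧ p.2 = x.2) := by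
          rintro ⟨h1, h2, h3, h4⟩
          exact hc ⟨c1.2.2.1, h2, h3, by rw [← c1.2.2.2]; exact h4⟩
        simp only [List.cons_append, List.nil_append, goB_cons3, if_pos c1, if_neg c2, goB_one_s9,
          goB_two_s9]
      · by_cases c2 : q.1 = 1 ∧ z.1 = 0 ∧ y.1 = 1 ∧ q.2 = y.2
        · simp [goB_cons3, goB_one_s9, goB_two_s9, c1, hc, c2]
        · simp [goB_cons3, goB_one_s9, goB_two_s9, c1, hc, c2]
  | (p :: q :: r :: t), z, y, x, hc => by
      by_cases c1 : p.1 = 1 ∧ q.1 = 0 ∧ r.1 = 1 ∧ p.2 = r.2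
      · have h1 : goB ((p::q::r::t) ++ [z,y,x]) = goB ((p::t) ++ [z,y,x]) := by
          rw [List.cons_append, List.cons_append, List.cons_append, goB_cons3, if_pos c1]
          try rfl
        have h2 : goB ((p::q::r::t) ++ [z,y]) = goB ((p::t) ++ [z,y]) := by
          rw [List.cons_append, List.cons_append, List.cons_append, goB_cons3, if_pos c1]
          try rfl
        rw [h1, h2, lemCB (p::t) z y x hc]
      · have h1 : goB ((p::q::r::t) ++ [z,y,x]) = p :: goB ((q::r::t) ++ [z,y,x]) := by
          rw [List.cons_append, List.cons_append, List.cons_append, goB_cons3, if_neg c1]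
          try rfl
        have h2 : goB ((p::q::r::t) ++ [z,y]) = p :: goB ((q::r::t) ++ [z,y]) := by
          rw [List.cons_append, List.cons_append, List.cons_append, goB_cons3, if_neg c1]
          try rfl
        rw [h1, h2, lemCB (q::r::t) z y x hc]
        rfl
termination_by N => N.length

theorem goB_reverse : ∀ l : L2, goB l.reverse = (goB l).reverse
  | [] => by simp [goB_nil]
  | [p] => by simp [goB_one_s9]
  | [p, q] => by simp [goB_two_s9]
  | (x :: y :: z :: rest) => by
      by_cases c : x.1 = 1 ∧ y.1 = 0 ∧ z.1 = 1 ∧ x.2 = z.2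
      · have hzx : z = x := Prod.ext (by rw [c.2.2.1, c.1]) (c.2.2.2.symm)
        have h1 : (x :: y :: z :: rest).reverse = rest.reverse ++ [x, y, x] := by
          subst hzx; simp
        rw [h1, lemAB rest.reverse x y c.1 c.2.1, goB_cons3, if_pos c]
        have : rest.reverse ++ [x] = (x :: rest).reverse := by simp
        rw [this, goB_reverse (x :: rest)]
      · have hc' : ¬ (z.1 = 1 ∧ y.1 = 0 ∧ x.1 = 1 ∧ z.2 = x.2) := by
          rintro ⟨h1, h2, h3, h4⟩; exact c ⟨h3, h2, h1, h4.symm⟩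
        have h1 : (x :: y :: z :: rest).reverse = rest.reverse ++ [z, y, x] := by simp
        rw [h1, lemCB rest.reverse z y x hc',
          show rest.reverse ++ [z, y] = (y :: z :: rest).reverse by simp,
          goB_reverse (y :: z :: rest), goB_cons3, if_neg c]
        simp
termination_by l => l.length

theorem goB_map_s9 (f : Fin 2 → Bool → Bool) (hf : ∀ i a b, f i a = f i b → a = b) :
    ∀ l : L2, goB (l.map fun p => (p.1, f p.1 p.2)) = (goB l).map fun p => (p.1, f p.1 p.2)
  | [] => by simp [goB_nil]
  | [p] => by simp [goB_one_s9]
  | [p, q] => by simp [goB_two_s9]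
  | (x :: y :: z :: rest) => by
      have hcond : ((x.1, f x.1 x.2).1 = 1 ∧ (y.1, f y.1 y.2).1 = 0 ∧ (z.1, f z.1 z.2).1 = 1 ∧
          (x.1, f x.1 x.2).2 = (z.1, f z.1 z.2).2) ↔
          (x.1 = 1 ∧ y.1 = 0 ∧ z.1 = 1 ∧ x.2 = z.2) := by
        constructor
        · rintro ⟨h1, h2, h3, h4⟩
          refine ⟨h1, h2, h3, hf 1 _ _ ?_⟩
          rw [← h1, ← h3] at *
          simpa [h1, ← h3] using h4
        · rintro ⟨h1, h2, h3, h4⟩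
          exact ⟨h1, h2, h3, by rw [h1, h3, h4]⟩
      by_cases c : x.1 = 1 ∧ y.1 = 0 ∧ z.1 = 1 ∧ x.2 = z.2
      · rw [List.map_cons, List.map_cons, List.map_cons, goB_cons3, if_pos (hcond.mpr c),
          goB_cons3, if_pos c]
        exact goB_map_s9 f hf (x :: rest)
      · rw [List.map_cons, List.map_cons, List.map_cons, goB_cons3, if_neg (hcond.not.mpr c),
          goB_cons3, if_neg c, List.map_cons]
        exact congrArg _ (goB_map_s9 f hf (y :: z :: rest))
termination_by l => l.length


lemma reduce_eq_self_of_alt : ∀ l : L2,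
    List.Chain' (fun p q : Fin 2 × Bool => p.1 ≠ q.1) l → reduce l = l
  | [] , _ => rfl
  | [p], _ => rfl
  | (x :: y :: t), h => by
      have ht : reduce (y :: t) = y :: t :=
        reduce_eq_self_of_alt (y :: t) h.tail
      rw [reduce.cons, ht]
      show (if x.1 = y.1 ∧ x.2 = !y.2 then t else x :: y :: t) = x :: y :: t
      rw [if_neg]
      rintro ⟨h1, -⟩
      exact (List.isChain_cons_cons.mp h).1 h1

lemma toWord_mk_alt_s9 {l : L2} (h : List.Chain' (fun p q : Fin 2 × Bool => p.1 ≠ q.1) l) :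
    (FreeGroup.mk l).toWord = l := by
  rw [FreeGroup.toWord_mk, reduce_eq_self_of_alt l h]

def flipA : Fin 2 × Bool → Fin 2 × Bool := fun p => (p.1, if p.1 = 0 then !p.2 else p.2)
def flipB : Fin 2 × Bool → Fin 2 × Bool := fun p => (p.1, if p.1 = 1 then !p.2 else p.2)

lemma phiaF_mk : ∀ l : L2, phiaF (FreeGroup.mk l) = FreeGroup.mk (l.map flipA)
  | [] => by simp [phiaF, FreeGroup.one_eq_mk.symm]
  | (p :: l) => by
      have : FreeGroup.mk (p :: l) = FreeGroup.mk [p] * FreeGroup.mk l := by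
        rw [FreeGroup.mul_mk]; rfl
      rw [this, MonoidHom.map_mul, phiaF_mk l, List.map_cons,
        show FreeGroup.mk (flipA p :: l.map flipA) = FreeGroup.mk [flipA p] * FreeGroup.mk (l.map flipA) by rw [FreeGroup.mul_mk]; rfl]
      congr 1
      have h01 : p.1 = 0 ∨ p.1 = 1 := by omega
      rcases h01 with h | h <;> rcases hb : p.2 with _ | _ <;>
        · have hp : p = (p.1, p.2) := rfl
          rw [hp, h, hb]
          simp [phiaF, flipA, FreeGroup.lift_mk, FreeGroup.inv_mk, FreeGroup.invRev, FreeGroup.of]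

lemma phibF_mk : ∀ l : L2, phibF (FreeGroup.mk l) = FreeGroup.mk (l.map flipB)
  | [] => by simp [phibF, FreeGroup.one_eq_mk.symm]
  | (p :: l) => by
      have : FreeGroup.mk (p :: l) = FreeGroup.mk [p] * FreeGroup.mk l := by
        rw [FreeGroup.mul_mk]; rfl
      rw [this, MonoidHom.map_mul, phibF_mk l, List.map_cons,
        show FreeGroup.mk (flipB p :: l.map flipB) = FreeGroup.mk [flipB p] * FreeGroup.mk (l.map flipB) by rw [FreeGroup.mul_mk]; rfl]
      congr 1
      have h01 : p.1 = 0 ∨ p.1 = 1 := by omega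
      rcases h01 with h | h <;> rcases hb : p.2 with _ | _ <;>
        · have hp : p = (p.1, p.2) := rfl
          rw [hp, h, hb]
          simp [phibF, flipB, FreeGroup.lift_mk, FreeGroup.inv_mk, FreeGroup.invRev, FreeGroup.of]

lemma toWord_phiaF {w : W} (hw : w ∈ Alt) : (phiaF w).toWord = w.toWord.map flipA := by
  conv_lhs => rw [← FreeGroup.mk_toWord (x := w)]
  rw [phiaF_mk, toWord_mk_alt_s9]
  unfold List.Chain'; rw [List.isChain_map]
  exact hw

lemma toWord_phibF {w : W} (hw : w ∈ Alt) : (phibF w).toWord = w.toWord.map flipB := by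
  conv_lhs => rw [← FreeGroup.mk_toWord (x := w)]
  rw [phibF_mk, toWord_mk_alt_s9]
  unfold List.Chain'; rw [List.isChain_map]
  exact hw

lemma alt_inv {w : W} (hw : w ∈ Alt) : w⁻¹ ∈ Alt := by
  unfold Alt at *
  rw [Set.mem_setOf_eq, FreeGroup.toWord_inv, FreeGroup.invRev]
  unfold List.Chain' at *; rw [List.isChain_reverse, List.isChain_map]
  exact List.IsChain.imp (fun a b h => h.symm) hw

lemma alt_phia {w : W} (hw : w ∈ Alt) : phiaF w ∈ Alt := by
  unfold Alt at *
  unfold List.Chain' at *; rw [Set.mem_setOf_eq, toWord_phiaF hw, List.isChain_map]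
  exact hw

lemma alt_phib {w : W} (hw : w ∈ Alt) : phibF w ∈ Alt := by
  unfold Alt at *
  unfold List.Chain' at *; rw [Set.mem_setOf_eq, toWord_phibF hw, List.isChain_map]
  exact hw

lemma phia_phia (w : W) : phiaF (phiaF w) = w := by
  have : phiaF.comp phiaF = MonoidHom.id W := by
    apply FreeGroup.ext_hom
    intro i
    fin_cases i <;> simp [phiaF, FreeGroup.lift_apply_of]
  calc phiaF (phiaF w) = (phiaF.comp phiaF) w := rfl
    _ = w := by rw [this]; rfl

lemma phib_phib (w : W) : phibF (phibF w) = w := by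
  have : phibF.comp phibF = MonoidHom.id W := by
    apply FreeGroup.ext_hom
    intro i
    fin_cases i <;> simp [phibF, FreeGroup.lift_apply_of]
  calc phibF (phibF w) = (phibF.comp phibF) w := rfl
    _ = w := by rw [this]; rfl

lemma goA_invRev_s9 (l : L2) : goA (FreeGroup.invRev l) = FreeGroup.invRev (goA l) := by
  unfold FreeGroup.invRev
  rw [goA_reverse]
  exact congrArg List.reverse
    (goA_map (fun _ b => !b) (by intro i a b h; cases a <;> cases b <;> simp_all) l)

lemma goB_invRev_s9 (l : L2) : goB (FreeGroup.invRev l) = FreeGroup.invRev (goB l) := by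
  unfold FreeGroup.invRev
  rw [goB_reverse]
  exact congrArg List.reverse
    (goB_map_s9 (fun _ b => !b) (by intro i a b h; cases a <;> cases b <;> simp_all) l)

lemma hinjA : ∀ (i : Fin 2) (a b : Bool),
    (if i = 0 then !a else a) = (if i = 0 then !b else b) → a = b := by
  intro i a b
  split <;> (cases a <;> cases b <;> simp_all)

lemma hinjB : ∀ (i : Fin 2) (a b : Bool),
    (if i = 1 then !a else a) = (if i = 1 then !b else b) → a = b := by
  intro i a b
  split <;> (cases a <;> cases b <;> simp_all)

lemma alphaF_inv (w : W) : alphaF w⁻¹ = (alphaF w)⁻¹ := by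
  unfold alphaF
  rw [FreeGroup.toWord_inv, goA_invRev_s9, ← FreeGroup.inv_mk]

lemma betaF_inv (w : W) : betaF w⁻¹ = (betaF w)⁻¹ := by
  unfold betaF
  rw [FreeGroup.toWord_inv, goB_invRev_s9, ← FreeGroup.inv_mk]

lemma alphaF_phia {w : W} (hw : w ∈ Alt) : alphaF (phiaF w) = phiaF (alphaF w) := by
  unfold alphaF
  rw [toWord_phiaF hw, phiaF_mk]
  exact congrArg FreeGroup.mk (goA_map (fun i b => if i = 0 then !b else b) hinjA w.toWord)

lemma alphaF_phib {w : W} (hw : w ∈ Alt) : alphaF (phibF w) = phibF (alphaF w) := by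
  unfold alphaF
  rw [toWord_phibF hw, phibF_mk]
  exact congrArg FreeGroup.mk (goA_map (fun i b => if i = 1 then !b else b) hinjB w.toWord)

lemma betaF_phia {w : W} (hw : w ∈ Alt) : betaF (phiaF w) = phiaF (betaF w) := by
  unfold betaF
  rw [toWord_phiaF hw, phiaF_mk]
  exact congrArg FreeGroup.mk (goB_map_s9 (fun i b => if i = 0 then !b else b) hinjA w.toWord)

lemma betaF_phib {w : W} (hw : w ∈ Alt) : betaF (phibF w) = phibF (betaF w) := by
  unfold betaF
  rw [toWord_phibF hw, phibF_mk]
  exact congrArg FreeGroup.mk (goB_map_s9 (fun i b => if i = 1 then !b else b) hinjB w.toWord)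

def AltT (t : W × W × W) : Prop := t.1 ∈ Alt ∧ t.2.1 ∈ Alt ∧ t.2.2 ∈ Alt
def Am (t : W × W × W) : W × W × W := (alphaF t.1, alphaF t.2.1, alphaF t.2.2)
def Bm (t : W × W × W) : W × W × W := (betaF t.1, betaF t.2.1, betaF t.2.2)

lemma base_alt {t t' : W × W × W} (h : TripleBase t t') (ht : AltT t) : AltT t' := by
  obtain ⟨h1, h2, h3⟩ := ht
  rcases h with h | h | h | h <;> subst h
  · exact ⟨h2, h3, h1⟩
  · exact ⟨alt_inv h3, alt_inv h2, alt_inv h1⟩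
  · exact ⟨alt_phia h1, alt_phia h2, alt_phia h3⟩
  · exact ⟨alt_phib h1, alt_phib h2, alt_phib h3⟩

lemma base_alt_rev {t t' : W × W × W} (h : TripleBase t t') (ht : AltT t') : AltT t := by
  obtain ⟨t1, t2, t3⟩ := t
  rcases h with h | h | h | h <;> subst h <;> obtain ⟨h1, h2, h3⟩ := ht
  · exact ⟨h3, h1, h2⟩
  · exact ⟨by simpa using alt_inv h3, by simpa using alt_inv h2, by simpa using alt_inv h1⟩
  · exact ⟨by simpa [phia_phia] using alt_phia h1, by simpa [phia_phia] using alt_phia h2,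
      by simpa [phia_phia] using alt_phia h3⟩
  · exact ⟨by simpa [phib_phib] using alt_phib h1, by simpa [phib_phib] using alt_phib h2,
      by simpa [phib_phib] using alt_phib h3⟩

lemma base_A {t t' : W × W × W} (h : TripleBase t t') (ht : AltT t) :
    TripleBase (Am t) (Am t') := by
  obtain ⟨h1, h2, h3⟩ := ht
  rcases h with h | h | h | h <;> subst h
  · exact Or.inl rfl
  · exact Or.inr (Or.inl (by simp [Am, TripleBase, alphaF_inv]))
  · exact Or.inr (Or.inr (Or.inl
      (by simp [Am, TripleBase, alphaF_phia h1, alphaF_phia h2, alphaF_phia h3])))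
  · exact Or.inr (Or.inr (Or.inr
      (by simp [Am, TripleBase, alphaF_phib h1, alphaF_phib h2, alphaF_phib h3])))

lemma base_B {t t' : W × W × W} (h : TripleBase t t') (ht : AltT t) :
    TripleBase (Bm t) (Bm t') := by
  obtain ⟨h1, h2, h3⟩ := ht
  rcases h with h | h | h | h <;> subst h
  · exact Or.inl rfl
  · exact Or.inr (Or.inl (by simp [Bm, TripleBase, betaF_inv]))
  · exact Or.inr (Or.inr (Or.inl
      (by simp [Bm, TripleBase, betaF_phia h1, betaF_phia h2, betaF_phia h3])))
  · exact Or.inr (Or.inr (Or.inr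
      (by simp [Bm, TripleBase, betaF_phib h1, betaF_phib h2, betaF_phib h3])))

lemma key {t t' : W × W × W} (h : TripleEquiv t t') :
    (AltT t ↔ AltT t') ∧
      (AltT t → TripleEquiv (Am t) (Am t') ∧ TripleEquiv (Bm t) (Bm t')) := by
  induction h with
  | rel a b hab =>
      exact ⟨⟨base_alt hab, base_alt_rev hab⟩,
        fun ha => ⟨Relation.EqvGen.rel _ _ (base_A hab ha),
          Relation.EqvGen.rel _ _ (base_B hab ha)⟩⟩
  | refl a => exact ⟨Iff.rfl, fun _ => ⟨Relation.EqvGen.refl _, Relation.EqvGen.refl _⟩⟩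
  | symm a b hab ih =>
      refine ⟨ih.1.symm, fun hb => ?_⟩
      obtain ⟨e1, e2⟩ := ih.2 (ih.1.mpr hb)
      exact ⟨Relation.EqvGen.symm _ _ e1, Relation.EqvGen.symm _ _ e2⟩
  | trans a b c hab hbc ih1 ih2 =>
      refine ⟨ih1.1.trans ih2.1, fun ha => ?_⟩
      obtain ⟨e1, e2⟩ := ih1.2 ha
      obtain ⟨f1, f2⟩ := ih2.2 (ih1.1.mp ha)
      exact ⟨Relation.EqvGen.trans _ _ _ e1 f1, Relation.EqvGen.trans _ _ _ e2 f2⟩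

/-- **Proposition.** If `(x₁,x₂,x₃) ∼ (y₁,y₂,y₃)` and `x₁,x₂,x₃` are alternating, then
`y₁,y₂,y₃` are alternating; moreover in that case `α(x₁,x₂,x₃) ∼ α(y₁,y₂,y₃)` and
`β(x₁,x₂,x₃) ∼ β(y₁,y₂,y₃)`. -/
theorem tripleEquiv_alt_and_alpha_beta (x₁ x₂ x₃ y₁ y₂ y₃ : W)
    (h : TripleEquiv (x₁, x₂, x₃) (y₁, y₂, y₃))
    (h₁ : x₁ ∈ Alt) (h₂ : x₂ ∈ Alt) (h₃ : x₃ ∈ Alt) :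
    (y₁ ∈ Alt ∧ y₂ ∈ Alt ∧ y₃ ∈ Alt) ∧
    TripleEquiv (alphaF x₁, alphaF x₂, alphaF x₃) (alphaF y₁, alphaF y₂, alphaF y₃) ∧
    TripleEquiv (betaF x₁, betaF x₂, betaF x₃) (betaF y₁, betaF y₂, betaF y₃) := by
  obtain ⟨hiff, hmap⟩ := key h
  have hA : AltT (x₁, x₂, x₃) := ⟨h₁, h₂, h₃⟩
  exact ⟨hiff.mp hA, (hmap hA).1, (hmap hA).2⟩
end

section
/- Let w ∈ 𝒜 be non-empty of even length and let c₁, c₂ ∈ 𝒜 be words such that c₁ w c₂ ∈ 𝒜 is an alternating word. Then there exist words d₁, d₂, w' ∈ 𝒜 with w' of even length and [w'] = ᾱ([w]) ∈ 𝒜̄₀ such that α(c₁ wⁿ c₂) = d₁ w'^{n−1} d₂ as reduced words for all n ≥ 1; if w lies in the commutator subgroup of F₂, then w' is non-empty. The analogous statement holds for β with β̄. -/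
open FreeGroup

/-- The first letter of `w` (as a one-letter word), or `1` if `w` is trivial. -/
def firstLetter (w : W) : W := FreeGroup.mk (w.toWord.take 1)

/-- `ᾱ` computed on a representative `w = x·w'` beginning with a letter `x`:
`ᾱ([w]) = [α(x w' x)·x⁻¹] = [α(w·x)·x⁻¹]`. -/
def abarF (w : W) : W := alphaF (w * firstLetter w) * (firstLetter w)⁻¹

/-- `β̄` computed on a representative `w = y·w'` beginning with a letter `y`. -/
def bbarF (w : W) : W := betaF (w * firstLetter w) * (firstLetter w)⁻¹

lemma fin2_iff (i : Fin 2) : (i = 1) ↔ ¬ i = 0 := by omega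
lemma fin2_iff' (i : Fin 2) : (i = 0) ↔ ¬ i = 1 := by omega

abbrev Wd := List Ltr
def RA (p q : Ltr) : Prop := p.1 ≠ q.1
def goG (g : Fin 2) : Wd → Wd
  | x :: y :: z :: rest =>
      if x.1 = g ∧ ¬ y.1 = g ∧ z.1 = g ∧ x.2 = z.2 then goG g (x :: rest)
      else x :: goG g (y :: z :: rest)
  | l => l
termination_by l => l.length
lemma goG_nil (g : Fin 2) : goG g [] = [] := by simp [goG]
lemma goG_one (g : Fin 2) (x : Ltr) : goG g [x] = [x] := by simp [goG]
lemma goG_two (g : Fin 2) (x y : Ltr) : goG g [x, y] = [x, y] := by simp [goG]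
lemma goG_cons3 (g : Fin 2) (x y z : Ltr) (r : Wd) :
    goG g (x :: y :: z :: r) =
      if x.1 = g ∧ ¬ y.1 = g ∧ z.1 = g ∧ x.2 = z.2 then goG g (x :: r)
      else x :: goG g (y :: z :: r) := by rw [goG]

/-- `goG` keeps the head letter. -/
lemma goG_head (g : Fin 2) : ∀ (x : Ltr) (L : Wd), ∃ T, goG g (x :: L) = x :: T
  | x, [] => ⟨[], goG_one g x⟩
  | x, [y] => ⟨[y], goG_two g x y⟩
  | x, y :: z :: r => by
      rw [goG_cons3]
      split
      · exact goG_head g x r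
      · exact ⟨_, rfl⟩
termination_by x L => L.length

/-- cons of a non-`g` letter commutes with `goG`. -/
lemma goG_cons_ne (g : Fin 2) (x : Ltr) (hx : ¬ x.1 = g) (L : Wd) :
    goG g (x :: L) = x :: goG g L := by
  match L with
  | [] => simp [goG]
  | [y] => simp [goG]
  | y :: z :: r => rw [goG_cons3, if_neg (by tauto)]

/-- `goG` preserves length parity. -/
lemma goG_len (g : Fin 2) : ∀ L : Wd, (goG g L).length % 2 = L.length % 2
  | [] => by rw [goG_nil]
  | [x] => by rw [goG_one]
  | [x, y] => by rw [goG_two]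
  | x :: y :: z :: r => by
      rw [goG_cons3]
      split
      · rw [goG_len g (x :: r)]; simp only [List.length_cons]; omega
      · have := goG_len g (y :: z :: r)
        simp only [List.length_cons] at *; omega
termination_by L => L.length

/-- `goG` preserves the alternating property. -/
lemma goG_chain (g : Fin 2) : ∀ L : Wd, List.Chain' RA L → List.Chain' RA (goG g L)
  | [], h => by rwa [goG_nil]
  | [x], h => by rwa [goG_one]
  | [x, y], h => by rwa [goG_two]
  | x :: y :: z :: r, h => by
      rw [goG_cons3]
      split
      · rename_i hc
        apply goG_chain g (x :: r)
        match r, h with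
        | [], _ => exact List.isChain_singleton x
        | w :: r', h =>
          have hzw : RA z w := (h.tail.tail).rel_head
          refine List.IsChain.cons_cons ?_ (h.tail.tail.tail)
          show x.1 ≠ w.1
          rw [hc.1, ← hc.2.2.1]; exact hzw
      · have h2 : List.Chain' RA (y :: z :: r) := h.tail
        obtain ⟨T, hT⟩ := goG_head g y (z :: r)
        rw [hT]
        exact List.IsChain.cons_cons h.rel_head (hT ▸ goG_chain g (y :: z :: r) h2)
termination_by L => L.length

/-- **Splitting lemma**: `goG` factors over a cut placed after a `g`-letter of sign `s`,
provided the second letter after the cut is not a `g`-letter of sign `s`. -/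
lemma goG_split (g : Fin 2) (s : Bool) :
    ∀ (P Q : Wd), P.getLast? = some (g, s) →
      (∀ z ∈ (Q.drop 1).head?, ¬(z.1 = g ∧ z.2 = s)) →
      goG g (P ++ Q) = goG g P ++ goG g Q
  | [], Q, hl, _ => by simp at hl
  | [x], Q, hl, hQ => by
      simp only [List.getLast?_singleton, Option.some_inj] at hl
      subst hl
      match Q with
      | [] => simp [goG_nil, goG_one]
      | [q] => simp [goG_nil, goG_one, goG_two]
      | q0 :: q1 :: Q' =>
          have hq1 : ¬(q1.1 = g ∧ q1.2 = s) := hQ q1 (by simp)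
          rw [List.singleton_append, goG_cons3, if_neg (by
            rintro ⟨-, -, h3, h4⟩; exact hq1 ⟨h3, h4.symm⟩), goG_one, List.singleton_append]
  | [x, y], Q, hl, hQ => by
      have hy : y = (g, s) := by simpa using hl
      subst hy
      match Q with
      | [] => simp [goG_nil, goG_two]
      | q0 :: Q'' =>
          have step1 : goG g (x :: (g,s) :: q0 :: Q'') = x :: goG g ((g,s) :: q0 :: Q'') := by
            rw [goG_cons3, if_neg (by rintro ⟨-, h2, -, -⟩; exact h2 rfl)]
          have step2 := goG_split g s [(g,s)] (q0 :: Q'') (by simp) hQ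
          simp only [List.singleton_append] at step2
          show goG g (x :: (g,s) :: q0 :: Q'') = goG g [x, (g,s)] ++ goG g (q0 :: Q'')
          rw [step1, step2, goG_one, goG_two]
          rfl
  | x :: y :: z :: P', Q, hl, hQ => by
      simp only [List.cons_append]
      rw [goG_cons3, goG_cons3]
      split
      · rename_i hc
        have hrec := goG_split g s (x :: P') Q ?_ hQ
        · simpa only [List.cons_append] using hrec
        · match P', hl with
          | [], hl =>
              have hz : z = (g, s) := by simpa using hl
              have hx : x = (g, s) := by
                have := hc.2.2; rw [hz] at this
                exact Prod.ext hc.1 this.2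
              simpa using hx
          | w :: P'', hl => simpa using hl
      · have hrec := goG_split g s (y :: z :: P') Q (by simpa using hl) hQ
        simp only [List.cons_append] at hrec
        rw [hrec, List.cons_append]
termination_by P _ => P.length

/-- Deleting a mergeable pair before a `g`-letter does not change `goG`. -/
lemma goG_del (g : Fin 2) (s : Bool) (y : Ltr) (hy : ¬ y.1 = g) :
    ∀ (A B : Wd), goG g (A ++ (g,s) :: y :: (g,s) :: B) = goG g (A ++ (g,s) :: B)
  | [], B => by
      simp only [List.nil_append]
      rw [goG_cons3, if_pos ⟨rfl, hy, rfl, rfl⟩]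
  | [x], B => by
      simp only [List.singleton_append]
      have h1 : goG g (x :: (g,s) :: y :: (g,s) :: B) = x :: goG g ((g,s) :: y :: (g,s) :: B) := by
        rw [goG_cons3, if_neg (by rintro ⟨-, h2, -, -⟩; exact h2 rfl)]
      have h2 := goG_del g s y hy [] B
      simp only [List.nil_append] at h2
      rw [h1, h2]
      match B with
      | [] => rw [goG_two, goG_one]
      | b0 :: B' =>
          rw [goG_cons3 g x (g,s) b0 B', if_neg (by rintro ⟨-, h2, -, -⟩; exact h2 rfl)]
  | x :: w :: A', B => by
      match A' with
      | [] =>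
          simp only [List.nil_append, List.cons_append]
          conv_rhs => rw [goG_cons3]
          conv_lhs => rw [goG_cons3]
          by_cases hc : x.1 = g ∧ ¬w.1 = g ∧ (g,s).1 = g ∧ x.2 = (g,s).2
          · rw [if_pos hc, if_pos hc, goG_cons3, if_pos ⟨hc.1, hy, rfl, hc.2.2.2⟩]
          · rw [if_neg hc, if_neg hc]
            have h2 := goG_del g s y hy [w] B
            simp only [List.singleton_append] at h2
            rw [h2]
      | a :: A'' =>
          simp only [List.cons_append]
          conv_rhs => rw [goG_cons3]
          conv_lhs => rw [goG_cons3]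
          by_cases hc : x.1 = g ∧ ¬w.1 = g ∧ a.1 = g ∧ x.2 = a.2
          · rw [if_pos hc, if_pos hc]
            have h2 := goG_del g s y hy (x :: A'') B
            simp only [List.cons_append] at h2
            rw [h2]
          · rw [if_neg hc, if_neg hc]
            have h2 := goG_del g s y hy (w :: a :: A'') B
            simp only [List.cons_append] at h2
            rw [h2]
termination_by A _ => A.length

/-- Words that are concatenations of blocks `[y, (g,s)]` with `y` not a `g`-letter. -/
inductive Ps (g : Fin 2) (s : Bool) : Wd → Prop
  | nil : Ps g s []
  | cons (y : Ltr) (hy : ¬ y.1 = g) (r : Wd) (h : Ps g s r) : Ps g s (y :: (g,s) :: r)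

lemma Ps.append {g s} {r₁ r₂ : Wd} (h₁ : Ps g s r₁) (h₂ : Ps g s r₂) : Ps g s (r₁ ++ r₂) := by
  induction h₁ with
  | nil => exact h₂
  | cons y hy r h ih => exact Ps.cons y hy _ ih

/-- Collapse lemma: a `Ps`-word sitting after a `(g,s)` letter is absorbed by `goG`. -/
lemma goG_collapse (g : Fin 2) (s : Bool) {r : Wd} (hr : Ps g s r) :
    ∀ (A B : Wd), goG g (A ++ (g,s) :: (r ++ B)) = goG g (A ++ (g,s) :: B) := by
  induction hr with
  | nil => intro A B; rfl
  | cons y hy r h ih =>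
      intro A B
      rw [show (A ++ (g,s) :: ((y :: (g,s) :: r) ++ B)) = A ++ (g,s) :: y :: (g,s) :: (r ++ B) by
        simp]
      rw [goG_del g s y hy A (r ++ B), ih A B]

lemma fin2_eq_of_ne {i j k : Fin 2} (h1 : i ≠ j) (h2 : k ≠ j) : i = k := by omega

lemma fin2_or (gg i j : Fin 2) (h : i ≠ j) : i = gg ∨ j = gg := by omega

/-- Build `Ps` from an alternating word of even length whose `g`-letters all have sign `s`
and which does not start with a `g`-letter. -/
lemma Ps_of (g : Fin 2) (s : Bool) : ∀ L : Wd, List.Chain' RA L →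
    (∀ p ∈ L, p.1 = g → p.2 = s) → L.length % 2 = 0 →
    (∀ p ∈ L.head?, ¬ p.1 = g) → Ps g s L
  | [], _, _, _, _ => Ps.nil
  | [x], _, _, hlen, _ => by simp at hlen
  | x :: p :: L', hch, hs, hlen, hh => by
      have hx : ¬ x.1 = g := hh x rfl
      have hp1 : p.1 = g := by
        have hxp : x.1 ≠ p.1 := hch.rel_head
        omega
      have hp : p = (g, s) := Prod.ext hp1 (hs p (by simp) hp1)
      rw [hp]
      refine Ps.cons x hx L' (Ps_of g s L' (hch.tail.tail) ?_ ?_ ?_)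
      · intro q hq hq1; exact hs q (by simp [hq]) hq1
      · simp only [List.length_cons] at hlen ⊢; omega
      · intro q hq
        match L', hq with
        | q :: L'', rfl =>
            have : p.1 ≠ q.1 := (hch.tail).rel_head
            rw [hp1] at this; exact fun h => this h.symm
termination_by L => L.length

/-- An alternating word is reduced. -/
lemma reduce_of_chain : ∀ {L : Wd}, List.Chain' RA L → FreeGroup.reduce L = L := by
  intro L h
  induction L with
  | nil => rfl
  | cons x L ih =>
      rw [FreeGroup.reduce.cons, ih h.tail]
      match L, h with
      | [], _ => rfl
      | y :: L', h =>
          have : x.1 ≠ y.1 := h.rel_head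
          show (if x.1 = y.1 ∧ x.2 = !y.2 then L' else x :: y :: L') = x :: y :: L'
          rw [if_neg (fun hh => this hh.1)]

lemma toWord_mk_chain {L : Wd} (h : List.Chain' RA L) : (FreeGroup.mk L).toWord = L := by
  rw [FreeGroup.toWord_mk, reduce_of_chain h]

/-- In an even-length alternating word, the first and last letters have distinct generators. -/
lemma headLast : ∀ L : Wd, List.Chain' RA L → L.length % 2 = 0 →
    ∀ x ∈ L.head?, ∀ z ∈ L.getLast?, x.1 ≠ z.1
  | [], _, _ => by simp
  | [x], _, hlen => by simp at hlen
  | [x, y], hch, _ => by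
      simp only [List.head?_cons, Option.mem_def, Option.some_inj, List.getLast?_cons_cons,
        List.getLast?_singleton]
      rintro a rfl b rfl
      exact hch.rel_head
  | x :: y :: a :: L', hch, hlen => by
      have ih := headLast (a :: L') hch.tail.tail (by
        simp only [List.length_cons] at hlen ⊢; omega)
      simp only [List.head?_cons, Option.mem_def, Option.some_inj] at ih ⊢
      rintro x' rfl z hz
      have h1 : x.1 ≠ y.1 := hch.rel_head
      have h2 : y.1 ≠ a.1 := hch.tail.rel_head
      have h3 : x.1 = a.1 := fin2_eq_of_ne h1 (Ne.symm h2)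
      rw [List.getLast?_cons_cons, List.getLast?_cons_cons] at hz
      rw [h3]; exact ih a rfl z hz

/-- Sign dichotomy for the `g`-letters of an alternating word. -/
lemma dichotomy (g : Fin 2) : ∀ L : Wd, List.Chain' RA L →
    (∃ s, ∀ p ∈ L, p.1 = g → p.2 = s) ∨
    (∃ (A : Wd) (s : Bool) (y : Ltr) (t : Bool) (B : Wd),
      ¬ y.1 = g ∧ s ≠ t ∧ L = A ++ (g,s) :: y :: (g,t) :: B) := by
  intro L h
  induction L with
  | nil => exact Or.inl ⟨true, by simp⟩
  | cons p L' ih =>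
      rcases ih h.tail with hleft | ⟨A, s, y, t, B, hy, hst, hB⟩
      · obtain ⟨s, hs⟩ := hleft
        by_cases hp : p.1 = g
        · match L', h with
          | [], _ => exact Or.inl ⟨p.2, by simp⟩
          | [q], h =>
              refine Or.inl ⟨p.2, ?_⟩
              have hq : q.1 ≠ g := by have h5 : p.1 ≠ q.1 := h.rel_head; omega
              rintro x hx hxg
              rcases List.mem_cons.1 hx with rfl | hx
              · rfl
              · simp only [List.mem_singleton] at hx; subst hx; exact absurd hxg hq
          | q :: r :: L'', h =>
              have hq : ¬ q.1 = g := by have h5 : p.1 ≠ q.1 := h.rel_head; omega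
              have hr : r.1 = g := by
                have h5 : q.1 ≠ r.1 := h.tail.rel_head
                have h6 : p.1 ≠ q.1 := h.rel_head
                omega
              by_cases hpr : p.2 = r.2
              · refine Or.inl ⟨r.2, ?_⟩
                rintro x hx hxg
                rcases List.mem_cons.1 hx with rfl | hx
                · exact hpr
                · rw [hs x hx hxg, ← hs r (by simp) hr]
              · refine Or.inr ⟨[], p.2, q, r.2, L'', hq, hpr, ?_⟩
                have hpp : p = (g, p.2) := Prod.ext hp rfl
                have hrr : r = (g, r.2) := Prod.ext hr rfl
                rw [List.nil_append, ← hpp, ← hrr]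
        · refine Or.inl ⟨s, ?_⟩
          rintro x hx hxg
          rcases List.mem_cons.1 hx with rfl | hx
          · exact absurd hxg hp
          · exact hs x hx hxg
      · exact Or.inr ⟨p :: A, s, y, t, B, hy, hst, by rw [hB]; rfl⟩

lemma flatten_rep_nil : ∀ k, (List.replicate k ([] : Wd)).flatten = []
  | 0 => rfl
  | k + 1 => by rw [List.replicate_succ, List.flatten_cons, List.nil_append, flatten_rep_nil k]

lemma flatten_rep_succ (L : Wd) (k : ℕ) :
    (List.replicate (k + 1) L).flatten = L ++ (List.replicate k L).flatten := by
  rw [List.replicate_succ, List.flatten_cons]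

lemma isConj_rot (X Y : Wd) : IsConj (FreeGroup.mk (Y ++ X)) (FreeGroup.mk (X ++ Y)) := by
  rw [isConj_iff]
  refine ⟨FreeGroup.mk X, ?_⟩
  rw [← FreeGroup.mul_mk, ← FreeGroup.mul_mk]
  group

/-- The exponent-sum homomorphism for generator `g`. -/
def phi (g : Fin 2) : FreeGroup (Fin 2) →* Multiplicative ℤ :=
  FreeGroup.lift (fun i => Multiplicative.ofAdd (if i = g then (1 : ℤ) else 0))

lemma phi_of_commutator (g : Fin 2) (x : FreeGroup (Fin 2))
    (hx : x ∈ commutator (FreeGroup (Fin 2))) : phi g x = 1 := by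
  rw [commutator_def] at hx
  have hle : ⁅(⊤ : Subgroup (FreeGroup (Fin 2))), ⊤⁆ ≤ (phi g).ker := by
    rw [Subgroup.commutator_le]
    intro a _ b _
    rw [MonoidHom.mem_ker, map_commutatorElement]
    exact commutatorElement_eq_one_iff_commute.mpr (mul_comm _ _)
  exact hle hx

lemma prod_ofAdd : ∀ l : List ℤ, (l.map Multiplicative.ofAdd).prod = Multiplicative.ofAdd l.sum
  | [] => rfl
  | a :: l => by
      rw [List.map_cons, List.prod_cons, prod_ofAdd l, List.sum_cons, ← ofAdd_add]

lemma sum_val (g : Fin 2) (s : Bool) :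
    ∀ L : List Ltr, (∀ p ∈ L, p.1 = g → p.2 = s) →
      (L.map (fun a => if a.1 = g then (bif a.2 then (1:ℤ) else -1) else 0)).sum =
        (bif s then (1:ℤ) else -1) * (L.countP (fun p => decide (p.1 = g)) : ℤ)
  | [], _ => by simp
  | p :: L, hs => by
      have hL := sum_val g s L (fun q hq => hs q (List.mem_cons_of_mem p hq))
      simp only [List.map_cons, List.sum_cons, List.countP_cons, hL]
      by_cases h : p.1 = g
      · rw [if_pos h, hs p List.mem_cons_self h]
        simp only [h]
        cases s <;> simp <;> push_cast <;> ring
      · rw [if_neg h]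
        simp only [h]
        simp

/-- Value of `phi` on an `mk` of a word all of whose `g`-letters have sign `s`. -/
lemma phi_val (g : Fin 2) (s : Bool) (L : Wd) (hs : ∀ p ∈ L, p.1 = g → p.2 = s) :
    phi g (FreeGroup.mk L) =
      Multiplicative.ofAdd ((cond s 1 (-1)) * (L.countP (fun p => decide (p.1 = g)) : ℤ)) := by
  rw [phi, FreeGroup.lift_mk]
  have : ∀ x ∈ L, (cond x.2 ((fun i => Multiplicative.ofAdd (if i = g then (1 : ℤ) else 0)) x.1)
      (((fun i => Multiplicative.ofAdd (if i = g then (1 : ℤ) else 0)) x.1)⁻¹)) =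
      Multiplicative.ofAdd (if x.1 = g then (cond x.2 (1:ℤ) (-1)) else 0) := by
    rintro ⟨i, b⟩ hx
    by_cases h : i = g <;> cases b <;> simp [h]
  rw [List.map_congr_left this,
    show (List.map (fun a : Ltr => Multiplicative.ofAdd (if a.1 = g then bif a.2 then (1:ℤ) else -1 else 0)) L)
      = List.map Multiplicative.ofAdd (List.map (fun a : Ltr => (if a.1 = g then bif a.2 then (1:ℤ) else -1 else 0)) L) by
        rw [List.map_map]; rfl,
    prod_ofAdd, sum_val g s L hs]

section CaseWords

variable (g : Fin 2)

/-- Case A word computation: a sign change inside `w` yields an exactly periodic image. -/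
lemma caseA_words (s t : Bool) (y : Ltr) (hy : ¬ y.1 = g) (hst : s ≠ t)
    (C1 C2 A B : Wd) : ∀ n, 1 ≤ n →
    goG g (C1 ++ ((List.replicate n (A ++ (g,s) :: y :: (g,t) :: B)).flatten ++ C2)) =
      goG g (C1 ++ (A ++ [(g,s)])) ++
      ((List.replicate (n-1) (goG g (y :: (g,t) :: (B ++ (A ++ [(g,s)]))))).flatten ++
        goG g (y :: (g,t) :: (B ++ C2))) := by
  set Wl : Wd := A ++ (g,s) :: y :: (g,t) :: B with hWl
  set v : Wd := y :: (g,t) :: (B ++ (A ++ [(g,s)])) with hv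
  set P : Wd := C1 ++ (A ++ [(g,s)]) with hP
  set D2 : Wd := y :: (g,t) :: (B ++ C2) with hD2
  have hQdrop : ∀ (rest : Wd), ∀ z ∈ ((y :: (g,t) :: rest).drop 1).head?, ¬(z.1 = g ∧ z.2 = s) := by
    rintro rest z hz ⟨h1, h2⟩
    simp only [List.drop_one, List.tail_cons, List.head?_cons, Option.mem_def,
      Option.some_inj] at hz
    subst hz
    exact hst h2.symm
  have hQshape : ∀ k, ∃ rest, (List.replicate k v).flatten ++ D2 = y :: (g,t) :: rest := by
    intro k
    match k with
    | 0 => exact ⟨B ++ C2, rfl⟩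
    | k + 1 => exact ⟨(B ++ (A ++ [(g,s)])) ++ ((List.replicate k v).flatten ++ D2), by
        rw [flatten_rep_succ]; simp [hv]⟩
  have hvlast : v.getLast? = some (g, s) := by
    rw [hv, show (y :: (g,t) :: (B ++ (A ++ [(g,s)]))) = (y :: (g,t) :: (B ++ A)) ++ [(g,s)] by
      simp, List.getLast?_concat]
  have hPlast : P.getLast? = some (g, s) := by
    rw [hP, show (C1 ++ (A ++ [(g,s)])) = (C1 ++ A) ++ [(g,s)] by simp, List.getLast?_concat]
  have hiter : ∀ k, goG g ((List.replicate k v).flatten ++ D2) =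
      (List.replicate k (goG g v)).flatten ++ goG g D2 := by
    intro k
    induction k with
    | zero => simp
    | succ k ih =>
        rw [flatten_rep_succ, flatten_rep_succ, List.append_assoc]
        obtain ⟨rest, hrest⟩ := hQshape k
        rw [goG_split g s v ((List.replicate k v).flatten ++ D2) hvlast
          (by rw [hrest]; exact hQdrop rest), ih, List.append_assoc]
  have hcore : ∀ k, (List.replicate (k+1) Wl).flatten =
      (A ++ [(g,s)]) ++ ((List.replicate k v).flatten ++ (y :: (g,t) :: B)) := by
    intro k
    induction k with
    | zero => simp [hWl]
    | succ k ih =>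
        rw [flatten_rep_succ, ih, flatten_rep_succ]
        simp [hWl, hv]
  intro n hn
  obtain ⟨k, rfl⟩ : ∃ k, n = k + 1 := ⟨n - 1, by omega⟩
  have hidn : C1 ++ ((List.replicate (k+1) Wl).flatten ++ C2) =
      P ++ ((List.replicate k v).flatten ++ D2) := by
    rw [hcore k]; simp [hP, hD2]
  rw [hidn]
  obtain ⟨rest, hrest⟩ := hQshape k
  rw [goG_split g s P ((List.replicate k v).flatten ++ D2) hPlast
    (by rw [hrest]; exact hQdrop rest), hiter k]
  simp

/-- Case B word computation: if all `g`-letters of `w` have the same sign,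
the image is independent of `n`. -/
lemma caseB_words (s₀ : Bool) (C1 C2 : Wd) (Wl : Wd) (hWc : List.Chain' RA Wl)
    (hs : ∀ p ∈ Wl, p.1 = g → p.2 = s₀) (hlen : Wl.length % 2 = 0) (hWne : Wl ≠ []) :
    ∀ n, 1 ≤ n →
    goG g (C1 ++ ((List.replicate n Wl).flatten ++ C2)) = goG g (C1 ++ (Wl ++ C2)) := by
  obtain ⟨p0, W1, rfl⟩ := List.exists_cons_of_ne_nil hWne
  have hW1ne : W1 ≠ [] := by
    intro h; subst h; simp at hlen
  obtain ⟨p1, rest, rfl⟩ := List.exists_cons_of_ne_nil hW1ne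
  intro n hn
  obtain ⟨k, rfl⟩ : ∃ k, n = k + 1 := ⟨n - 1, by omega⟩
  by_cases hp0 : p0.1 = g
  · -- `w` starts with a `g`-letter
    have hp0eq : p0 = (g, s₀) := Prod.ext hp0 (hs p0 (by simp) hp0)
    set T : Wd := p1 :: rest with hT
    set v : Wd := T ++ [(g,s₀)] with hv
    have hvchain : List.Chain' RA v := by
      have hWW : List.Chain' RA ((p0 :: T) ++ (p0 :: T)) := by
        apply List.isChain_append.mpr
        refine ⟨hWc, hWc, ?_⟩
        intro z hz x hx
        simp only [List.head?_cons, Option.mem_def, Option.some_inj] at hx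
        subst hx
        exact Ne.symm (headLast _ hWc hlen p0 rfl z hz)
      exact hWW.infix ⟨[p0], T, by simp [hv, hp0eq]⟩
    have hvPs : Ps g s₀ v := by
      apply Ps_of g s₀ v hvchain
      · intro p hp hpg
        apply hs p _ hpg
        rw [hv] at hp
        rcases List.mem_append.mp hp with h | h
        · exact List.mem_cons_of_mem _ h
        · simp only [List.mem_singleton] at h; subst h; rw [← hp0eq]; simp
      · have hlv : v.length = (p0 :: T).length := by simp [hv, hT]
        rw [hlv]; exact hlen
      · intro p hp
        simp only [hv, hT, List.cons_append, List.head?_cons, Option.mem_def,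
          Option.some_inj] at hp
        subst hp
        have : p0.1 ≠ p1.1 := hWc.rel_head
        omega
    have hflat : ∀ j, Ps g s₀ ((List.replicate j v).flatten) := by
      intro j
      induction j with
      | zero => exact Ps.nil
      | succ j ih => rw [flatten_rep_succ]; exact hvPs.append ih
    have hWn : ∀ j, (List.replicate (j+1) (p0 :: T)).flatten =
        (g,s₀) :: ((List.replicate j v).flatten ++ T) := by
      intro j
      induction j with
      | zero => simp [hp0eq]
      | succ j ih =>
          rw [flatten_rep_succ, ih, flatten_rep_succ]
          simp [hv, hp0eq]
    rw [hWn k]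
    have h1 : C1 ++ (((g,s₀) :: ((List.replicate k v).flatten ++ T)) ++ C2) =
        C1 ++ ((g,s₀) :: ((List.replicate k v).flatten ++ (T ++ C2))) := by simp
    rw [h1, goG_collapse g s₀ (hflat k) C1 (T ++ C2)]
    congr 1
    simp [hp0eq]
  · -- `w` starts with a non-`g`-letter, hence ends with a `g`-letter
    have hWlPs : Ps g s₀ (p0 :: p1 :: rest) := by
      apply Ps_of g s₀ _ hWc hs hlen
      intro p hp
      simp only [List.head?_cons, Option.mem_def, Option.some_inj] at hp
      subst hp; exact hp0
    have hflat : ∀ j, Ps g s₀ ((List.replicate j (p0 :: p1 :: rest)).flatten) := by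
      intro j
      induction j with
      | zero => exact Ps.nil
      | succ j ih => rw [flatten_rep_succ]; exact hWlPs.append ih
    obtain ⟨W0, q, hW0⟩ : ∃ W0 q, (p0 :: p1 :: rest : Wd) = W0 ++ [q] := by
      rcases List.eq_nil_or_concat (p0 :: p1 :: rest : Wd) with h | ⟨W0, q, h⟩
      · simp at h
      · exact ⟨W0, q, by simpa [List.concat_eq_append] using h⟩
    have hq : q = (g, s₀) := by
      have hqW : q ∈ (p0 :: p1 :: rest : Wd) := by rw [hW0]; simp
      have hlast : (p0 :: p1 :: rest : Wd).getLast? = some q := by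
        rw [hW0, List.getLast?_concat]
      have hq1 : q.1 = g := by
        have := headLast _ hWc hlen p0 rfl q hlast
        omega
      exact Prod.ext hq1 (hs q hqW hq1)
    have hPsF := hflat k
    rw [flatten_rep_succ]
    generalize hF : (List.replicate k (p0 :: p1 :: rest)).flatten = F at hPsF ⊢
    have h1 : C1 ++ (((p0 :: p1 :: rest) ++ F) ++ C2) =
        (C1 ++ W0) ++ ((g,s₀) :: (F ++ C2)) := by
      rw [hW0, hq]; simp
    rw [h1, goG_collapse g s₀ hPsF (C1 ++ W0) C2]
    have h2 : (C1 ++ W0) ++ ((g,s₀) :: C2) = C1 ++ ((p0 :: p1 :: rest) ++ C2) := by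
      rw [hW0, hq]; simp
    rw [h2]

end CaseWords

/-- The generic goal, for generator `g`. -/
def Goal (g : Fin 2) (w c₁ c₂ : FreeGroup (Fin 2)) : Prop :=
  ∃ d₁ d₂ w' : FreeGroup (Fin 2),
    Even w'.toWord.length ∧
    (w ∈ commutator (FreeGroup (Fin 2)) → w' ≠ 1) ∧
    (∃ u, IsConj u w ∧ (u.toWord.head?).map Prod.fst = some g ∧
      IsConj w' (FreeGroup.mk (goG g (u * FreeGroup.mk (u.toWord.take 1)).toWord) *
        (FreeGroup.mk (u.toWord.take 1))⁻¹)) ∧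
    ∀ n : ℕ, 1 ≤ n →
      (FreeGroup.mk (goG g (c₁ * w ^ n * c₂).toWord)).toWord =
        d₁.toWord ++ (List.replicate (n - 1) w'.toWord).flatten ++ d₂.toWord

lemma mainG (g : Fin 2) (w c₁ c₂ : FreeGroup (Fin 2)) (hne : w ≠ 1)
    (heven : Even w.toWord.length)
    (halt : List.Chain' RA (c₁.toWord ++ w.toWord ++ c₂.toWord)) : Goal g w c₁ c₂ := by
  obtain ⟨Wl, hWl⟩ : ∃ L, w.toWord = L := ⟨_, rfl⟩
  obtain ⟨C1, hC1d⟩ : ∃ L, c₁.toWord = L := ⟨_, rfl⟩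
  obtain ⟨C2, hC2d⟩ : ∃ L, c₂.toWord = L := ⟨_, rfl⟩
  rw [hWl] at heven
  rw [hWl, hC1d, hC2d] at halt
  have hWne : Wl ≠ [] := fun h => hne (FreeGroup.toWord_eq_nil_iff.mp (hWl.trans h))
  have hlen2 : Wl.length % 2 = 0 := Nat.even_iff.mp heven
  have hWc : List.Chain' RA Wl := halt.infix ⟨C1, C2, rfl⟩
  have hC1 : List.Chain' RA C1 := halt.prefix ⟨Wl ++ C2, by simp⟩
  have hC2 : List.Chain' RA C2 := halt.suffix ⟨C1 ++ Wl, by simp⟩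
  have hhl : ∀ x ∈ Wl.head?, ∀ z ∈ Wl.getLast?, x.1 ≠ z.1 := headLast Wl hWc hlen2
  have hj1 : ∀ x ∈ C1.getLast?, ∀ y ∈ Wl.head?, RA x y := by
    have h := (List.isChain_append.mp (by rwa [List.append_assoc] at halt)).2.2
    intro x hx y hy
    refine h x hx y ?_
    rcases Wl with _ | ⟨a, Wl'⟩
    · exact absurd rfl hWne
    · simpa using hy
  have hWW : List.Chain' RA (Wl ++ Wl) := by
    apply List.isChain_append.mpr
    exact ⟨hWc, hWc, fun z hz x hx => Ne.symm (hhl x hx z hz)⟩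
  have hmid : ∀ k, List.Chain' RA (Wl ++ ((List.replicate k Wl).flatten ++ C2)) := by
    intro k
    induction k with
    | zero => exact (show List.IsChain RA (Wl ++ C2) from halt.suffix ⟨C1, by simp⟩)
    | succ k ih =>
        rw [flatten_rep_succ, List.append_assoc]
        apply List.isChain_append.mpr
        refine ⟨hWc, ih, ?_⟩
        intro z hz x hx
        refine Ne.symm (hhl x ?_ z hz)
        rcases Wl with _ | ⟨a, Wl'⟩
        · exact absurd rfl hWne
        · simpa using hx
  have hbigchain : ∀ k, List.Chain' RA (C1 ++ (Wl ++ ((List.replicate k Wl).flatten ++ C2))) := by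
    intro k
    apply List.isChain_append.mpr
    refine ⟨hC1, hmid k, ?_⟩
    intro x hx y hy
    refine hj1 x hx y ?_
    rcases Wl with _ | ⟨a, Wl'⟩
    · exact absurd rfl hWne
    · simpa using hy
  have hbigeq : ∀ n : ℕ, c₁ * w ^ n * c₂ =
      FreeGroup.mk (C1 ++ ((List.replicate n Wl).flatten ++ C2)) := by
    intro n
    conv_lhs => rw [← FreeGroup.mk_toWord (x := c₁), ← FreeGroup.mk_toWord (x := w),
      ← FreeGroup.mk_toWord (x := c₂)]
    rw [hWl, hC1d, hC2d, FreeGroup.pow_mk, FreeGroup.mul_mk, FreeGroup.mul_mk,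
      List.append_assoc]
  have hbigword : ∀ n : ℕ, 1 ≤ n → (c₁ * w ^ n * c₂).toWord =
      C1 ++ ((List.replicate n Wl).flatten ++ C2) := by
    intro n hn
    rw [hbigeq n]
    apply toWord_mk_chain
    obtain ⟨k, rfl⟩ : ∃ k, n = k + 1 := ⟨n - 1, by omega⟩
    rw [flatten_rep_succ, List.append_assoc]
    exact hbigchain k
  rcases dichotomy g Wl hWc with ⟨s₀, hs₀⟩ | ⟨A, s, y, t, B, hy, hst, hWeq⟩
  · -- CASE B : all `g`-letters have the same sign
    have hKchain : List.Chain' RA (goG g (C1 ++ (Wl ++ C2))) :=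
      goG_chain g _ (by simpa [List.append_assoc] using halt)
    refine ⟨FreeGroup.mk (goG g (C1 ++ (Wl ++ C2))), 1, 1, by simp, ?_, ?_, ?_⟩
    · -- w is not in the commutator subgroup
      intro hwc
      exfalso
      have hone := phi_of_commutator g w hwc
      rw [← FreeGroup.mk_toWord (x := w), hWl, phi_val g s₀ Wl hs₀] at hone
      have hcnt : 0 < Wl.countP (fun p => decide (p.1 = g)) := by
        rw [List.countP_pos_iff]
        obtain ⟨p0, W1, rfl⟩ := List.exists_cons_of_ne_nil hWne
        have hW1ne : W1 ≠ [] := by intro h; subst h; simp at hlen2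
        obtain ⟨p1, rest, rfl⟩ := List.exists_cons_of_ne_nil hW1ne
        have h01 : p0.1 ≠ p1.1 := hWc.rel_head
        rcases fin2_or g _ _ h01 with h | h
        · exact ⟨p0, by simp, by simp [h]⟩
        · exact ⟨p1, by simp, by simp [h]⟩
      have h2 : (bif s₀ then (1:ℤ) else -1) * (Wl.countP (fun p => decide (p.1 = g)) : ℤ) = 0 := by
        have h3 := congrArg Multiplicative.toAdd hone
        simp only [toAdd_ofAdd, toAdd_one] at h3
        exact h3
      cases s₀
      · simp only [Bool.cond_false] at h2; omega
      · simp only [Bool.cond_true] at h2; omega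
    · -- conjugacy witness
      obtain ⟨p0, T, hWT⟩ := List.exists_cons_of_ne_nil hWne
      have hTne : T ≠ [] := by
        intro h; rw [hWT, h] at hlen2; simp at hlen2
      obtain ⟨p1, rest, hT⟩ := List.exists_cons_of_ne_nil hTne
      have hmemT : ∀ p ∈ T, p ∈ Wl := by
        intro p hp; rw [hWT]; exact List.mem_cons_of_mem _ hp
      by_cases hp0 : p0.1 = g
      · -- u = w itself
        have hp0eq : p0 = (g, s₀) := Prod.ext hp0 (hs₀ p0 (by rw [hWT]; simp) hp0)
        refine ⟨w, IsConj.refl w, ?_, ?_⟩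
        · rw [hWl, hWT]; simp [hp0eq]
        · have htake : w.toWord.take 1 = [(g,s₀)] := by rw [hWl, hWT, hp0eq]; rfl
          have hmul : w * FreeGroup.mk [(g,s₀)] = FreeGroup.mk (Wl ++ [(g,s₀)]) := by
            conv_lhs => rw [← FreeGroup.mk_toWord (x := w), hWl]
            rw [FreeGroup.mul_mk]
          have hchain2 : List.Chain' RA (Wl ++ [(g,s₀)]) :=
            hWW.infix ⟨[], T, by rw [hWT]; simp [hp0eq]⟩
          have hvPs : Ps g s₀ (T ++ [(g,s₀)]) := by
            apply Ps_of g s₀ _ (hWW.infix ⟨[p0], T, by rw [hWT]; simp [hp0eq]⟩)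
            · intro p hp hpg
              rcases List.mem_append.mp hp with h | h
              · exact hs₀ p (hmemT p h) hpg
              · simp only [List.mem_singleton] at h; subst h; rfl
            · have : (T ++ [(g,s₀)]).length = Wl.length := by rw [hWT]; simp
              rw [this]; exact hlen2
            · intro p hp
              rw [hT] at hp
              simp only [List.cons_append, List.head?_cons, Option.mem_def,
                Option.some_inj] at hp
              subst hp
              have h01 : p0.1 ≠ p1.1 := by
                rw [hWT, hT] at hWc; exact hWc.rel_head
              omega
          have hgo : goG g (Wl ++ [(g,s₀)]) = [(g,s₀)] := by
            have hid : Wl ++ [(g,s₀)] = [] ++ ((g,s₀) :: ((T ++ [(g,s₀)]) ++ [])) := by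
              rw [hWT]; simp [hp0eq]
            rw [hid, goG_collapse g s₀ hvPs [] []]
            exact goG_one g _
          rw [htake, hmul, toWord_mk_chain hchain2, hgo, mul_inv_cancel]
      · -- u is the rotation putting the first letter at the end
        have hp1g : p1.1 = g := by
          have h01 : p0.1 ≠ p1.1 := by rw [hWT, hT] at hWc; exact hWc.rel_head
          omega
        have hp1eq : p1 = (g, s₀) :=
          Prod.ext hp1g (hs₀ p1 (by rw [hWT, hT]; simp) hp1g)
        have hucChain : List.Chain' RA (T ++ [p0]) :=
          hWW.infix ⟨[p0], T, by rw [hWT]; simp⟩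
        have hutoW : (FreeGroup.mk (T ++ [p0])).toWord = T ++ [p0] := toWord_mk_chain hucChain
        refine ⟨FreeGroup.mk (T ++ [p0]), ?_, ?_, ?_⟩
        · have h5 := isConj_rot [p0] T
          rw [show ([p0] ++ T) = Wl by rw [hWT]; rfl, ← hWl, FreeGroup.mk_toWord] at h5
          exact h5
        · rw [hutoW, hT]; simp [hp1eq]
        · have htake : (FreeGroup.mk (T ++ [p0])).toWord.take 1 = [(g,s₀)] := by
            rw [hutoW, hT, hp1eq]; rfl
          have hmul : FreeGroup.mk (T ++ [p0]) * FreeGroup.mk [(g,s₀)] =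
              FreeGroup.mk ((T ++ [p0]) ++ [(g,s₀)]) := by rw [FreeGroup.mul_mk]
          have hchain2 : List.Chain' RA ((T ++ [p0]) ++ [(g,s₀)]) :=
            hWW.infix ⟨[p0], rest, by rw [hWT, hT]; simp [hp1eq]⟩
          have hrPs : Ps g s₀ (rest ++ [p0, (g,s₀)]) := by
            apply Ps_of g s₀ _ (hWW.infix ⟨[p0, (g,s₀)], rest, by rw [hWT, hT]; simp [hp1eq]⟩)
            · intro p hp hpg
              rcases List.mem_append.mp hp with h | h
              · exact hs₀ p (hmemT p (by rw [hT]; exact List.mem_cons_of_mem _ h)) hpg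
              · rcases List.mem_cons.mp h with h1 | h1
                · subst h1; exact absurd hpg hp0
                · simp only [List.mem_singleton] at h1; subst h1; rfl
            · have hll : (rest ++ [p0, (g,s₀)]).length = Wl.length := by
                rw [hWT, hT]
                simp only [List.length_append, List.length_cons, List.length_nil]
              rw [hll]; exact hlen2
            · intro p hp
              rcases rest with _ | ⟨c, rest'⟩
              · simp only [List.nil_append, List.head?_cons, Option.mem_def,
                  Option.some_inj] at hp
                subst hp; exact hp0
              · simp only [List.cons_append, List.head?_cons, Option.mem_def,
                  Option.some_inj] at hp
                subst hp
                have h12 : p1.1 ≠ c.1 := by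
                  rw [hWT, hT] at hWc; exact hWc.tail.rel_head
                omega
          have hgo : goG g ((T ++ [p0]) ++ [(g,s₀)]) = [(g,s₀)] := by
            have hid : (T ++ [p0]) ++ [(g,s₀)] =
                [] ++ ((g,s₀) :: ((rest ++ [p0, (g,s₀)]) ++ [])) := by
              rw [hT]; simp [hp1eq]
            rw [hid, goG_collapse g s₀ hrPs [] []]
            exact goG_one g _
          rw [htake, hmul, toWord_mk_chain hchain2, hgo, mul_inv_cancel]
    · -- the word computation
      intro n hn
      rw [hbigword n hn, caseB_words g s₀ C1 C2 Wl hWc hs₀ hlen2 hWne n hn,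
        toWord_mk_chain hKchain]
      simp [flatten_rep_nil]
  · -- CASE A : a sign change exists
    have hPc : List.Chain' RA (C1 ++ (A ++ [(g,s)])) :=
      halt.prefix ⟨(y :: (g,t) :: B) ++ C2, by rw [hWeq]; simp⟩
    have hvc : List.Chain' RA (y :: (g,t) :: (B ++ (A ++ [(g,s)]))) :=
      hWW.infix ⟨A ++ [(g,s)], y :: (g,t) :: B, by rw [hWeq]; simp⟩
    have hD2c : List.Chain' RA (y :: (g,t) :: (B ++ C2)) :=
      halt.suffix ⟨C1 ++ (A ++ [(g,s)]), by rw [hWeq]; simp⟩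
    have huc : List.Chain' RA ((g,t) :: (B ++ (A ++ [(g,s), y]))) :=
      hWW.infix ⟨A ++ [(g,s), y], (g,t) :: B, by rw [hWeq]; simp⟩
    have huLg : List.Chain' RA (((g,t) :: (B ++ (A ++ [(g,s), y]))) ++ [(g,t)]) :=
      hWW.infix ⟨A ++ [(g,s), y], B, by rw [hWeq]; simp⟩
    have htd1 : (FreeGroup.mk (goG g (C1 ++ (A ++ [(g,s)])))).toWord =
        goG g (C1 ++ (A ++ [(g,s)])) := toWord_mk_chain (goG_chain g _ hPc)
    have htw' : (FreeGroup.mk (goG g (y :: (g,t) :: (B ++ (A ++ [(g,s)]))))).toWord =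
        goG g (y :: (g,t) :: (B ++ (A ++ [(g,s)]))) := toWord_mk_chain (goG_chain g _ hvc)
    have htd2 : (FreeGroup.mk (goG g (y :: (g,t) :: (B ++ C2)))).toWord =
        goG g (y :: (g,t) :: (B ++ C2)) := toWord_mk_chain (goG_chain g _ hD2c)
    have hvy : goG g (y :: (g,t) :: (B ++ (A ++ [(g,s)]))) =
        y :: goG g ((g,t) :: (B ++ (A ++ [(g,s)]))) := goG_cons_ne g y hy _
    refine ⟨FreeGroup.mk (goG g (C1 ++ (A ++ [(g,s)]))),
      FreeGroup.mk (goG g (y :: (g,t) :: (B ++ C2))),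
      FreeGroup.mk (goG g (y :: (g,t) :: (B ++ (A ++ [(g,s)])))), ?_, ?_, ?_, ?_⟩
    · rw [htw']
      rw [Nat.even_iff, goG_len]
      have hlv : (y :: (g,t) :: (B ++ (A ++ [(g,s)]))).length = Wl.length := by
        rw [hWeq]
        simp only [List.length_cons, List.length_append, List.length_singleton, List.length_nil]
        omega
      rw [hlv]; exact hlen2
    · intro _
      intro h1
      have h2 := congrArg FreeGroup.toWord h1
      rw [htw', FreeGroup.toWord_one, hvy] at h2
      exact List.cons_ne_nil _ _ h2
    · -- conjugacy
      have hutoW : (FreeGroup.mk ((g,t) :: (B ++ (A ++ [(g,s), y])))).toWord =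
          (g,t) :: (B ++ (A ++ [(g,s), y])) := toWord_mk_chain huc
      refine ⟨FreeGroup.mk ((g,t) :: (B ++ (A ++ [(g,s), y]))), ?_, ?_, ?_⟩
      · have h5 := isConj_rot (A ++ [(g,s), y]) ((g,t) :: B)
        rw [show (((g,t) :: B) ++ (A ++ [(g,s), y])) = (g,t) :: (B ++ (A ++ [(g,s), y])) by
          simp] at h5
        rw [show ((A ++ [(g,s), y]) ++ ((g,t) :: B)) = Wl by rw [hWeq]; simp] at h5
        rwa [← hWl, FreeGroup.mk_toWord] at h5
      · rw [hutoW]; simp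
      · have htake : (FreeGroup.mk ((g,t) :: (B ++ (A ++ [(g,s), y])))).toWord.take 1 =
            [(g,t)] := by rw [hutoW]; rfl
        have hmul : FreeGroup.mk ((g,t) :: (B ++ (A ++ [(g,s), y]))) * FreeGroup.mk [(g,t)] =
            FreeGroup.mk (((g,t) :: (B ++ (A ++ [(g,s), y]))) ++ [(g,t)]) := by
          rw [FreeGroup.mul_mk]
        have htoW2 : (FreeGroup.mk (((g,t) :: (B ++ (A ++ [(g,s), y]))) ++ [(g,t)])).toWord =
            ((g,t) :: (B ++ (A ++ [(g,s), y]))) ++ [(g,t)] := toWord_mk_chain huLg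
        have hm_last : ((g,t) :: (B ++ (A ++ [(g,s)]))).getLast? = some (g,s) := by
          rw [show ((g,t) :: (B ++ (A ++ [(g,s)]))) = ((g,t) :: (B ++ A)) ++ [(g,s)] by simp,
            List.getLast?_concat]
        have hsplit2 : goG g ((((g,t) :: (B ++ (A ++ [(g,s), y]))) ++ [(g,t)])) =
            goG g ((g,t) :: (B ++ (A ++ [(g,s)]))) ++ [y, (g,t)] := by
          rw [show (((g,t) :: (B ++ (A ++ [(g,s), y]))) ++ [(g,t)]) =
              ((g,t) :: (B ++ (A ++ [(g,s)]))) ++ [y, (g,t)] by simp]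
          rw [goG_split g s _ [y, (g,t)] hm_last (by
            rintro z hz ⟨h1, h2⟩
            simp only [List.drop_one, List.tail_cons, List.head?_cons, Option.mem_def,
              Option.some_inj] at hz
            subst hz
            exact hst h2.symm), goG_two]
        rw [htake, hmul, htoW2, hsplit2]
        rw [show goG g ((g,t) :: (B ++ (A ++ [(g,s)]))) ++ [y, (g,t)] =
            (goG g ((g,t) :: (B ++ (A ++ [(g,s)]))) ++ [y]) ++ [(g,t)] by simp,
          ← FreeGroup.mul_mk, mul_inv_cancel_right]
        have h6 := isConj_rot (goG g ((g,t) :: (B ++ (A ++ [(g,s)])))) [y]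
        rw [show ([y] ++ goG g ((g,t) :: (B ++ (A ++ [(g,s)])))) =
            y :: goG g ((g,t) :: (B ++ (A ++ [(g,s)]))) by simp] at h6
        rw [hvy]
        exact h6
    · -- the word computation
      intro n hn
      have hchainbig : List.Chain' RA (C1 ++ ((List.replicate n Wl).flatten ++ C2)) := by
        obtain ⟨k, rfl⟩ : ∃ k, n = k + 1 := ⟨n - 1, by omega⟩
        rw [flatten_rep_succ, List.append_assoc]
        exact hbigchain k
      rw [hbigword n hn, toWord_mk_chain (goG_chain g _ hchainbig), hWeq,
        caseA_words g s t y hy hst C1 C2 A B n hn, htd1, htw', htd2]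
      simp

lemma goB_eq_goG : ∀ L, goB L = goG 1 L
  | [] => by simp [goB, goG]
  | [x] => by simp [goB, goG]
  | [x, y] => by simp [goB, goG]
  | x :: y :: z :: r => by
      rw [goB, goG_cons3]
      by_cases h : x.1 = 1 ∧ y.1 = 0 ∧ z.1 = 1 ∧ x.2 = z.2
      · rw [if_pos h, if_pos ⟨h.1, by rw [← fin2_iff']; exact h.2.1, h.2.2⟩,
          goB_eq_goG (x :: r)]
      · rw [if_neg h, if_neg (fun hc => h ⟨hc.1, by rw [fin2_iff']; exact hc.2.1, hc.2.2⟩),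
          goB_eq_goG (y :: z :: r)]
termination_by L => L.length

lemma goA_eq_goG : ∀ L, goA L = goG 0 L
  | [] => by simp [goA, goG]
  | [x] => by simp [goA, goG]
  | [x, y] => by simp [goA, goG]
  | x :: y :: z :: r => by
      rw [goA, goG_cons3]
      by_cases h : x.1 = 0 ∧ y.1 = 1 ∧ z.1 = 0 ∧ x.2 = z.2
      · rw [if_pos h, if_pos ⟨h.1, by rw [← fin2_iff]; exact h.2.1, h.2.2⟩,
          goA_eq_goG (x :: r)]
      · rw [if_neg h, if_neg (fun hc => h ⟨hc.1, by rw [fin2_iff]; exact hc.2.1, hc.2.2⟩),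
          goA_eq_goG (y :: z :: r)]
termination_by L => L.length

/-- **Proposition.** Let `w ∈ 𝒜` be non-empty of even length and `c₁, c₂ ∈ 𝒜` with
`c₁ w c₂` alternating. Then there are `d₁, d₂, w' ∈ 𝒜` with `w'` of even length and
`[w'] = ᾱ([w])` such that `α(c₁ wⁿ c₂) = d₁ w'^{n-1} d₂` as reduced words for all
`n ≥ 1`; if `w` lies in the commutator subgroup then `w'` is non-empty.
The analogous statement holds for `β` and `β̄`. -/
theorem alphaF_on_powers (w c₁ c₂ : W) (hne : w ≠ 1) (heven : Even w.toWord.length)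
    (halt : List.Chain' (fun p q : Fin 2 × Bool => p.1 ≠ q.1)
      (c₁.toWord ++ w.toWord ++ c₂.toWord)) :
    (∃ d₁ d₂ w' : W,
      Even w'.toWord.length ∧
      (w ∈ commutator W → w' ≠ 1) ∧
      (∃ u : W, IsConj u w ∧ (u.toWord.head?).map Prod.fst = some (0 : Fin 2) ∧
        IsConj w' (abarF u)) ∧
      ∀ n : ℕ, 1 ≤ n →
        (alphaF (c₁ * w ^ n * c₂)).toWord =
          d₁.toWord ++ (List.replicate (n - 1) w'.toWord).flatten ++ d₂.toWord) ∧
    (∃ d₁ d₂ w' : W,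
      Even w'.toWord.length ∧
      (w ∈ commutator W → w' ≠ 1) ∧
      (∃ u : W, IsConj u w ∧ (u.toWord.head?).map Prod.fst = some (1 : Fin 2) ∧
        IsConj w' (bbarF u)) ∧
      ∀ n : ℕ, 1 ≤ n →
        (betaF (c₁ * w ^ n * c₂)).toWord =
          d₁.toWord ++ (List.replicate (n - 1) w'.toWord).flatten ++ d₂.toWord) := by
  constructor
  · obtain ⟨d₁, d₂, w', h1, h2, ⟨u, hu1, hu2, hu3⟩, h4⟩ := mainG 0 w c₁ c₂ hne heven halt
    refine ⟨d₁, d₂, w', h1, h2, ⟨u, hu1, hu2, ?_⟩, ?_⟩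
    · simpa only [abarF, alphaF, firstLetter, goA_eq_goG] using hu3
    · intro n hn
      simpa only [alphaF, goA_eq_goG] using h4 n hn
  · obtain ⟨d₁, d₂, w', h1, h2, ⟨u, hu1, hu2, hu3⟩, h4⟩ := mainG 1 w c₁ c₂ hne heven halt
    refine ⟨d₁, d₂, w', h1, h2, ⟨u, hu1, hu2, ?_⟩, ?_⟩
    · simpa only [bbarF, betaF, firstLetter, goB_eq_goG] using hu3
    · intro n hn
      simpa only [betaF, goB_eq_goG] using h4 n hn
end
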